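/- arXiv:1301.2942 — 4 statements merged into one kernel-verified Lean document; each statement's English description precedes it below -/
import Mathlib

section
/- Let n ≥ 2, let t_{i,jk} ∈ [0,1) for 1 ≤ i ≤ n and 1 ≤ j < k ≤ n, set λ_{i,jk} := e^{2πi t_{i,jk}}, and let T : ℝ^{n(n−1)/2} → ℝⁿ be the linear map with (T x)_i = ∑_{1≤j<k≤n} t_{i,jk} x_{jk}. Then the following are equivalent: (i) the identity is the only σ_λ-regular central element of G(n); (ii) T⁻¹(ℤⁿ) ∩ ℤ^{n(n−1)/2} = {0}; (iii) T(ℤ^{n(n−1)/2} ∖ {0}) ∩ ℤⁿ = ∅. -/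
open scoped BigOperators

namespace FreeNilp

/-- Index set for pairs `(j,k)` with `j < k`. -/
abbrev PairIdx (n : ℕ) : Type := {p : Fin n × Fin n // p.1 < p.2}

/-- The free nilpotent group of class 2 and rank `n`, realized on
`ℤ^n × ℤ^{n(n-1)/2}`. -/
@[ext] structure G (n : ℕ) where
  u : Fin n → ℤ
  v : PairIdx n → ℤ

namespace G

instance (n : ℕ) : Group (G n) where
  mul r s := ⟨fun i => r.u i + s.u i, fun p => r.v p + s.v p + r.u p.1.1 * s.u p.1.2⟩
  one := ⟨fun _ => 0, fun _ => 0⟩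
  inv r := ⟨fun i => -r.u i, fun p => -r.v p + r.u p.1.1 * r.u p.1.2⟩
  mul_assoc r s t := by
    refine G.ext ?_ ?_ <;> funext x
    · show (r.u x + s.u x) + t.u x = r.u x + (s.u x + t.u x)
      ring
    · show (r.v x + s.v x + r.u x.1.1 * s.u x.1.2) + t.v x +
          (r.u x.1.1 + s.u x.1.1) * t.u x.1.2 =
        r.v x + (s.v x + t.v x + s.u x.1.1 * t.u x.1.2) +
          r.u x.1.1 * (s.u x.1.2 + t.u x.1.2)
      ring
  one_mul r := by
    refine G.ext ?_ ?_ <;> funext x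
    · show 0 + r.u x = r.u x
      ring
    · show 0 + r.v x + 0 * r.u x.1.2 = r.v x
      ring
  mul_one r := by
    refine G.ext ?_ ?_ <;> funext x
    · show r.u x + 0 = r.u x
      ring
    · show r.v x + 0 + r.u x.1.1 * 0 = r.v x
      ring
  inv_mul_cancel r := by
    refine G.ext ?_ ?_ <;> funext x
    · show -r.u x + r.u x = 0
      ring
    · show (-r.v x + r.u x.1.1 * r.u x.1.2) + r.v x + -r.u x.1.1 * r.u x.1.2 = 0
      ring

@[simp] lemma mul_u {n : ℕ} (r s : G n) (i : Fin n) : (r * s).u i = r.u i + s.u i := rfl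
@[simp] lemma mul_v {n : ℕ} (r s : G n) (p : PairIdx n) :
    (r * s).v p = r.v p + s.v p + r.u p.1.1 * s.u p.1.2 := rfl
@[simp] lemma one_u {n : ℕ} (i : Fin n) : (1 : G n).u i = 0 := rfl
@[simp] lemma one_v {n : ℕ} (p : PairIdx n) : (1 : G n).v p = 0 := rfl
@[simp] lemma inv_u {n : ℕ} (r : G n) (i : Fin n) : (r⁻¹).u i = -r.u i := rfl
@[simp] lemma inv_v {n : ℕ} (r : G n) (p : PairIdx n) :
    (r⁻¹).v p = -r.v p + r.u p.1.1 * r.u p.1.2 := rfl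

end G

/-- First-block coordinate `r_i`. -/
def uc {n : ℕ} (r : G n) (i : Fin n) : ℤ := r.u i

/-- Second-block coordinate `r_{jk}` (zero unless `j < k`). -/
def vc {n : ℕ} (r : G n) (j k : Fin n) : ℤ := if h : j < k then r.v ⟨(j, k), h⟩ else 0

/-- A multiplier (2-cocycle with values in the circle group) of a group. -/
def IsMultiplier {Γ : Type*} [Group Γ] (σ : Γ → Γ → Circle) : Prop :=
  (∀ r s t : Γ, σ r s * σ (r * s) t = σ r (s * t) * σ s t) ∧
  ∀ r : Γ, σ r 1 = 1 ∧ σ 1 r = 1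

/-- Similarity (cohomology) of multipliers. -/
def Similar {Γ : Type*} [Group Γ] (σ τ : Γ → Γ → Circle) : Prop :=
  ∃ β : Γ → Circle, ∀ r s : Γ, τ r s = β r * β s * (β (r * s))⁻¹ * σ r s

/-- The subgroup `H(n) ≅ ℤⁿ` of `G n`: only the coordinates `r_n` and `r_{jn}` may
be nonzero. -/
def Hsub (n : ℕ) : Subgroup (G n) where
  carrier := {r | (∀ i : Fin n, (i : ℕ) + 1 < n → r.u i = 0) ∧
                  ∀ p : PairIdx n, (p.1.2 : ℕ) + 1 < n → r.v p = 0}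
  one_mem' := ⟨fun _ _ => rfl, fun _ _ => rfl⟩
  mul_mem' := by
    rintro r s ⟨hr1, hr2⟩ ⟨hs1, hs2⟩
    refine ⟨fun i hi => ?_, fun p hp => ?_⟩
    · simp [hr1 i hi, hs1 i hi]
    · simp [hr2 p hp, hs2 p hp, hs1 p.1.2 hp]
  inv_mem' := by
    rintro r ⟨hr1, hr2⟩
    refine ⟨fun i hi => ?_, fun p hp => ?_⟩
    · simp [hr1 i hi]
    · simp [hr2 p hp, hr1 p.1.2 hp]

/-- The subgroup `G(n-1)` of `G n`: the coordinates `r_n` and `r_{jn}` vanish. -/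
def Gsub (n : ℕ) : Subgroup (G n) where
  carrier := {r | (∀ i : Fin n, (i : ℕ) + 1 = n → r.u i = 0) ∧
                  ∀ p : PairIdx n, (p.1.2 : ℕ) + 1 = n → r.v p = 0}
  one_mem' := ⟨fun _ _ => rfl, fun _ _ => rfl⟩
  mul_mem' := by
    rintro r s ⟨hr1, hr2⟩ ⟨hs1, hs2⟩
    refine ⟨fun i hi => ?_, fun p hp => ?_⟩
    · simp [hr1 i hi, hs1 i hi]
    · simp [hr2 p hp, hs2 p hp, hs1 p.1.2 hp]
  inv_mem' := by
    rintro r ⟨hr1, hr2⟩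
    refine ⟨fun i hi => ?_, fun p hp => ?_⟩
    · simp [hr1 i hi]
    · simp [hr2 p hp, hr1 p.1.2 hp]

lemma mem_Hsub_iff {n : ℕ} {r : G n} :
    r ∈ Hsub n ↔ (∀ i : Fin n, (i : ℕ) + 1 < n → r.u i = 0) ∧
      ∀ p : PairIdx n, (p.1.2 : ℕ) + 1 < n → r.v p = 0 := Iff.rfl

lemma mem_Gsub_iff {n : ℕ} {r : G n} :
    r ∈ Gsub n ↔ (∀ i : Fin n, (i : ℕ) + 1 = n → r.u i = 0) ∧
      ∀ p : PairIdx n, (p.1.2 : ℕ) + 1 = n → r.v p = 0 := Iff.rfl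

/-- `H(n)` is a normal subgroup; conjugation preserves it. -/
lemma conj_mem_Hsub {n : ℕ} (s : G n) {a : G n} (ha : a ∈ Hsub n) :
    s * a * s⁻¹ ∈ Hsub n := by
  obtain ⟨ha1, ha2⟩ := ha
  refine ⟨fun i hi => ?_, fun p hp => ?_⟩
  · simp [ha1 i hi]
  · have hj : (p.1.1 : ℕ) + 1 < n := by
      have h2 : (p.1.1 : ℕ) < (p.1.2 : ℕ) := p.2
      omega
    simp [ha2 p hp, ha1 p.1.2 hp, ha1 p.1.1 hj]

/-- The action `α_b(a) = b a b⁻¹` of `G(n-1)` on `H(n)`. -/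
def conjH {n : ℕ} (b : Gsub n) (a : Hsub n) : Hsub n :=
  ⟨(b : G n) * (a : G n) * (b : G n)⁻¹, conj_mem_Hsub _ a.2⟩

/-- The `H(n)`-part of the unique factorization `r = a·b`, `a ∈ H(n)`, `b ∈ G(n-1)`. -/
def hpart {n : ℕ} (r : G n) : Hsub n :=
  ⟨⟨fun i => if (i : ℕ) + 1 = n then r.u i else 0,
    fun p => if (p.1.2 : ℕ) + 1 = n then r.v p else 0⟩, by
    refine ⟨fun i hi => ?_, fun p hp => ?_⟩
    · exact if_neg (by omega)
    · exact if_neg (by omega)⟩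

/-- The `G(n-1)`-part of the unique factorization `r = a·b`. -/
def gpart {n : ℕ} (r : G n) : Gsub n :=
  ⟨⟨fun i => if (i : ℕ) + 1 = n then 0 else r.u i,
    fun p => if (p.1.2 : ℕ) + 1 = n then 0 else r.v p⟩, by
    refine ⟨fun i hi => ?_, fun p hp => ?_⟩
    · exact if_pos hi
    · exact if_pos hp⟩

/-- `r` indeed factors as `hpart r * gpart r`. -/
lemma hpart_mul_gpart {n : ℕ} (r : G n) : ((hpart r : G n)) * (gpart r : G n) = r := by
  refine G.ext ?_ ?_ <;> funext x
  · show (if ((x : ℕ)) + 1 = n then r.u x else 0) + (if (x : ℕ) + 1 = n then 0 else r.u x) = r.u x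
    split <;> ring
  · show (if ((x.1.2 : ℕ)) + 1 = n then r.v x else 0) +
      (if (x.1.2 : ℕ) + 1 = n then 0 else r.v x) +
      (if ((x.1.1 : ℕ)) + 1 = n then r.u x.1.1 else 0) *
        (if (x.1.2 : ℕ) + 1 = n then 0 else r.u x.1.2) = r.v x
    have h2 : (x.1.1 : ℕ) < (x.1.2 : ℕ) := x.2
    have h3 : (x.1.2 : ℕ) < n := x.1.2.isLt
    rcases eq_or_ne ((x.1.2 : ℕ) + 1) n with h | h
    · rw [if_pos h, if_pos h, if_pos h, if_neg (by omega)]; ring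
    · rw [if_neg h, if_neg h, if_neg h, if_neg (show ¬((x.1.1 : ℕ) + 1 = n) by omega)]
      ring

/-- An admissible pair `(σ_H, g)` (Mackey data with trivial multiplier on `G(n-1)`). -/
structure AdmissiblePair (n : ℕ) (σH : Hsub n → Hsub n → Circle)
    (g : Hsub n → Gsub n → Circle) : Prop where
  multH : IsMultiplier σH
  g_one_right : ∀ a : Hsub n, g a 1 = 1
  g_one_left : ∀ b : Gsub n, g 1 b = 1
  g_add : ∀ (a a' : Hsub n) (b : Gsub n),
    g (a * a') b = σH (conjH b a) (conjH b a') * (σH a a')⁻¹ * (g a b * g a' b)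
  g_mul : ∀ (a : Hsub n) (b b' : Gsub n), g a (b * b') = g (conjH b' a) b * g a b'

/-- An admissible triple `(σ_H, g, σ')`. -/
def AdmissibleTriple (n : ℕ) (σH : Hsub n → Hsub n → Circle)
    (g : Hsub n → Gsub n → Circle) (σ' : Gsub n → Gsub n → Circle) : Prop :=
  AdmissiblePair n σH g ∧ IsMultiplier σ'

/-- The map `σ_n(a′b, ab′) = σ_H(a′, α_b(a)) g(a,b) σ′(b,b′)` defined via the unique
factorizations. -/
noncomputable def sigmaN {n : ℕ} (σH : Hsub n → Hsub n → Circle) (g : Hsub n → Gsub n → Circle)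
    (σ' : Gsub n → Gsub n → Circle) (r s : G n) : Circle :=
  σH (hpart r) (conjH (gpart r) (hpart s)) * g (hpart s) (gpart r) *
    σ' (gpart r) (gpart s)

/-- The map `τ(a′b, ab′) = σ_H(a′, α_b(a)) g(a,b)` defined via the unique factorizations. -/
noncomputable def tauN {n : ℕ} (σH : Hsub n → Hsub n → Circle) (g : Hsub n → Gsub n → Circle)
    (r s : G n) : Circle :=
  σH (hpart r) (conjH (gpart r) (hpart s)) * g (hpart s) (gpart r)

/-- The generator `u_i`. -/
def uE {n : ℕ} (i : Fin n) : G n := ⟨fun j => if j = i then 1 else 0, fun _ => 0⟩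

/-- The generator `v_{jk}`. -/
def vE {n : ℕ} (j k : Fin n) : G n := ⟨fun _ => 0, fun p => if p.1 = (j, k) then 1 else 0⟩

/-- The last index `n` (i.e. `n-1` in `Fin n`). -/
def lastI (n : ℕ) (hn : 0 < n) : Fin n := ⟨n - 1, by omega⟩

/-- `u_n` as an element of `H(n)`. -/
def unH {n : ℕ} (hn : 0 < n) : Hsub n :=
  ⟨uE (lastI n hn), by
    refine ⟨fun i hi => ?_, fun p hp => rfl⟩
    have h : i ≠ lastI n hn := by
      intro h; apply absurd hi; rw [h]; show ¬ (n - 1) + 1 < n; omega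
    simp [uE, h]⟩

/-- `u_i` (for `i < n`) as an element of `G(n-1)`. -/
def uiG {n : ℕ} (i : Fin n) (hi : (i : ℕ) + 1 < n) : Gsub n :=
  ⟨uE i, by
    refine ⟨fun j hj => ?_, fun p hp => rfl⟩
    have h : j ≠ i := by intro h; rw [h] at hj; omega
    simp [uE, h]⟩

/-- `v_{in}` (for `i < n`) as an element of `H(n)`. -/
def vinH {n : ℕ} (i : Fin n) (hi : (i : ℕ) + 1 < n) : Hsub n :=
  ⟨vE i (lastI n (by omega)), by
    refine ⟨fun j hj => rfl, fun p hp => ?_⟩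
    have h : p.1 ≠ (i, lastI n (by omega)) := by
      intro h
      have h2 : (p.1.2 : ℕ) = n - 1 := by rw [h]; rfl
      omega
    simp [vE, h]⟩

/-- `v_{ij}` (for `j < n`) as an element of `G(n-1)`. -/
def vijG {n : ℕ} (i j : Fin n) (hj : (j : ℕ) + 1 < n) : Gsub n :=
  ⟨vE i j, by
    refine ⟨fun k hk => rfl, fun p hp => ?_⟩
    have h : p.1 ≠ (i, j) := by
      intro h
      have h2 : (p.1.2 : ℕ) = (j : ℕ) := by rw [h]
      omega
    simp [vE, h]⟩

/-- The "word part" `w(a)` of `a ∈ H(n)`. -/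
def wH {n : ℕ} (a : Hsub n) : Hsub n :=
  ⟨⟨(a : G n).u, fun _ => 0⟩,
    ⟨fun i hi => (mem_Hsub_iff.mp a.2).1 i hi, fun _ _ => rfl⟩⟩

/-- The "central part" `z(a)` of `a ∈ H(n)`. -/
def zH {n : ℕ} (a : Hsub n) : Hsub n :=
  ⟨⟨fun _ => 0, (a : G n).v⟩,
    ⟨fun _ _ => rfl, fun p hp => (mem_Hsub_iff.mp a.2).2 p hp⟩⟩

/-- The "word part" `w(b)` of `b ∈ G(n-1)`. -/
def wG {n : ℕ} (b : Gsub n) : Gsub n :=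
  ⟨⟨(b : G n).u, fun _ => 0⟩,
    ⟨fun i hi => (mem_Gsub_iff.mp b.2).1 i hi, fun _ _ => rfl⟩⟩

/-- The "central part" `z(b)` of `b ∈ G(n-1)`. -/
def zG {n : ℕ} (b : Gsub n) : Gsub n :=
  ⟨⟨fun _ => 0, (b : G n).v⟩,
    ⟨fun _ _ => rfl, fun p hp => (mem_Gsub_iff.mp b.2).2 p hp⟩⟩

/-- `g(v_{in}, u_j)`, as a total function (equal to `1` outside the admissible range). -/
noncomputable def gvu {n : ℕ} (g : Hsub n → Gsub n → Circle) (i j : Fin n) : Circle :=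
  if h : (i : ℕ) + 1 < n ∧ (j : ℕ) + 1 < n then g (vinH i h.1) (uiG j h.2) else 1

/-- `g(u_n, v_{ij})`, as a total function (equal to `1` outside the admissible range). -/
noncomputable def guv {n : ℕ} (g : Hsub n → Gsub n → Circle) (i j : Fin n) : Circle :=
  if h : (j : ℕ) + 1 < n then g (unH (by omega)) (vijG i j h) else 1

/-- A normalized pair `(σ_H, g)`: admissible, with `σ_H` of the standard `λ`-form, and
`g(u_n, u_i) = 1` for all `1 ≤ i ≤ n-1`. -/
def Normalized {n : ℕ} (hn : 0 < n) (σH : Hsub n → Hsub n → Circle)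
    (g : Hsub n → Gsub n → Circle) (lam : Fin n → Circle) : Prop :=
  AdmissiblePair n σH g ∧
  (∀ a' a : Hsub n, σH a' a =
    ∏ i ∈ Finset.univ.filter (fun i : Fin n => (i : ℕ) + 1 < n),
      lam i ^ (uc (a' : G n) (lastI n hn) * vc (a : G n) i (lastI n hn))) ∧
  ∀ (i : Fin n) (hi : (i : ℕ) + 1 < n), g (unH hn) (uiG i hi) = 1

/-- The multiplier `σ_λ` of `G n` attached to a family of parameters
`λ_{i,jk} ∈ 𝕋` (`1 ≤ i ≤ k`, `1 ≤ j < k ≤ n`). -/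
noncomputable def sigmaLam {n : ℕ} (lam : Fin n → Fin n → Fin n → Circle) (r s : G n) : Circle :=
  (∏ t ∈ Finset.univ.filter
      (fun t : Fin n × Fin n × Fin n => t.1 < t.2.1 ∧ t.2.1 < t.2.2),
    lam t.1 t.2.1 t.2.2 ^ (vc s t.2.1 t.2.2 * uc r t.1 + uc s t.2.2 * vc r t.1 t.2.1) *
    lam t.2.1 t.1 t.2.2 ^ (vc s t.1 t.2.2 * uc r t.2.1 +
      uc s t.2.2 * (uc r t.1 * uc r t.2.1 - vc r t.1 t.2.1))) *
  ∏ p ∈ Finset.univ.filter (fun p : Fin n × Fin n => p.1 < p.2),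
    lam p.1 p.1 p.2 ^ (vc s p.1 p.2 * uc r p.1 +
      uc s p.2 * (uc r p.1 * (uc r p.1 - 1) / 2)) *
    lam p.2 p.1 p.2 ^ (uc r p.2 * (vc s p.1 p.2 + uc r p.1 * uc s p.2) +
      uc r p.1 * (uc s p.2 * (uc s p.2 - 1) / 2))

/-- The extension of the parameter family to indices `i > k`, via
`λ_{k,ij} = λ_{i,jk}⁻¹ λ_{j,ik}` for `i < j < k`. -/
noncomputable def lamExt {n : ℕ} (lam : Fin n → Fin n → Fin n → Circle) (i j k : Fin n) : Circle :=
  if i ≤ k then lam i j k else (lam j k i)⁻¹ * lam k j i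

section Helpers

lemma cexp_zpow (x : ℝ) (m : ℤ) : Circle.exp x ^ m = Circle.exp (m * x) := by
  induction m using Int.induction_on with
  | zero => simp
  | succ k ih =>
      rw [zpow_add_one, ih]
      push_cast
      rw [add_mul, one_mul, Circle.exp_add]
  | pred k ih =>
      rw [zpow_sub_one, ih]
      push_cast
      rw [sub_mul, one_mul, Circle.exp_sub, div_eq_mul_inv]

lemma cexp_sum {α : Type*} (s : Finset α) (f : α → ℝ) :
    ∏ i ∈ s, Circle.exp (f i) = Circle.exp (∑ i ∈ s, f i) := by
  classical
  induction s using Finset.induction_on with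
  | empty => simp
  | insert _ _ h ih => rw [Finset.prod_insert h, Finset.sum_insert h, ih, Circle.exp_add]

/-- Decomposition of a sum over all `(m, (j,k))` with `j < k`, according to the
position of `m` relative to `j` and `k`. -/
lemma sum_over_pairs {n : ℕ} (f : Fin n → Fin n × Fin n → ℝ) :
    (∑ m : Fin n, ∑ p ∈ Finset.univ.filter (fun p : Fin n × Fin n => p.1 < p.2), f m p) =
      (∑ q ∈ Finset.univ.filter
          (fun q : Fin n × Fin n × Fin n => q.1 < q.2.1 ∧ q.2.1 < q.2.2),
        (f q.1 (q.2.1, q.2.2) + f q.2.1 (q.1, q.2.2) + f q.2.2 (q.1, q.2.1))) +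
      ∑ p ∈ Finset.univ.filter (fun p : Fin n × Fin n => p.1 < p.2), (f p.1 p + f p.2 p) := by
  classical
  have hS : (∑ m : Fin n,
      ∑ p ∈ Finset.univ.filter (fun p : Fin n × Fin n => p.1 < p.2), f m p) =
      ∑ q ∈ Finset.univ.filter (fun q : Fin n × Fin n × Fin n => q.2.1 < q.2.2),
        f q.1 q.2 := by
    rw [← Finset.sum_product']
    apply Finset.sum_congr _ (fun _ _ => rfl)
    ext q
    simp
  rw [hS]
  set S := Finset.univ.filter (fun q : Fin n × Fin n × Fin n => q.2.1 < q.2.2) with hSdef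
  have hsplit1 := Finset.sum_filter_add_sum_filter_not S
    (fun q : Fin n × Fin n × Fin n => q.1 < q.2.1) (fun q => f q.1 q.2)
  have hsplit2 := Finset.sum_filter_add_sum_filter_not
    (S.filter (fun q : Fin n × Fin n × Fin n => ¬ q.1 < q.2.1))
    (fun q : Fin n × Fin n × Fin n => q.1 = q.2.1) (fun q => f q.1 q.2)
  have hsplit3 := Finset.sum_filter_add_sum_filter_not
    ((S.filter (fun q : Fin n × Fin n × Fin n => ¬ q.1 < q.2.1)).filter
      (fun q : Fin n × Fin n × Fin n => ¬ q.1 = q.2.1))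
    (fun q : Fin n × Fin n × Fin n => q.1 < q.2.2) (fun q => f q.1 q.2)
  have hsplit4 := Finset.sum_filter_add_sum_filter_not
    (((S.filter (fun q : Fin n × Fin n × Fin n => ¬ q.1 < q.2.1)).filter
      (fun q : Fin n × Fin n × Fin n => ¬ q.1 = q.2.1)).filter
      (fun q : Fin n × Fin n × Fin n => ¬ q.1 < q.2.2))
    (fun q : Fin n × Fin n × Fin n => q.1 = q.2.2) (fun q => f q.1 q.2)
  -- Piece 1 : `m < j`, identified with the triple set.
  have h1 : (∑ q ∈ S.filter (fun q : Fin n × Fin n × Fin n => q.1 < q.2.1), f q.1 q.2) =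
      ∑ q ∈ Finset.univ.filter
          (fun q : Fin n × Fin n × Fin n => q.1 < q.2.1 ∧ q.2.1 < q.2.2),
        f q.1 (q.2.1, q.2.2) := by
    apply Finset.sum_congr _ (fun _ _ => rfl)
    rw [hSdef, Finset.filter_filter]
    apply Finset.filter_congr
    intro q _
    simp [and_comm]
  -- Piece 2 : `m = j`, identified with the pair set.
  have h2 : (∑ q ∈ (S.filter (fun q : Fin n × Fin n × Fin n => ¬ q.1 < q.2.1)).filter
        (fun q : Fin n × Fin n × Fin n => q.1 = q.2.1), f q.1 q.2) =
      ∑ p ∈ Finset.univ.filter (fun p : Fin n × Fin n => p.1 < p.2), f p.1 p := by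
    apply Finset.sum_nbij' (fun q => q.2) (fun p => (p.1, p))
    · intro q hq
      simp only [hSdef, Finset.mem_filter, Finset.mem_univ, true_and] at hq ⊢
      exact hq.1.1
    · intro p hp
      simp only [hSdef, Finset.mem_filter, Finset.mem_univ, true_and] at hp ⊢
      exact ⟨⟨hp, lt_irrefl _⟩, trivial⟩
    · intro q hq
      simp only [hSdef, Finset.mem_filter] at hq
      exact Prod.ext hq.2.symm rfl
    · intro p _
      rfl
    · intro q hq
      simp only [hSdef, Finset.mem_filter] at hq
      rw [hq.2]
  -- Piece 3 : `j < m < k`, identified with the triple set.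
  have h3 : (∑ q ∈ ((S.filter (fun q : Fin n × Fin n × Fin n => ¬ q.1 < q.2.1)).filter
        (fun q : Fin n × Fin n × Fin n => ¬ q.1 = q.2.1)).filter
        (fun q : Fin n × Fin n × Fin n => q.1 < q.2.2), f q.1 q.2) =
      ∑ q ∈ Finset.univ.filter
          (fun q : Fin n × Fin n × Fin n => q.1 < q.2.1 ∧ q.2.1 < q.2.2),
        f q.2.1 (q.1, q.2.2) := by
    apply Finset.sum_nbij' (fun q => (q.2.1, (q.1, q.2.2)))
      (fun q => (q.2.1, (q.1, q.2.2)))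
    · intro q hq
      simp only [hSdef, Finset.mem_filter, Finset.mem_univ, true_and] at hq ⊢
      exact ⟨lt_of_le_of_ne (not_lt.mp hq.1.1.2) (Ne.symm hq.1.2), hq.2⟩
    · intro q hq
      simp only [hSdef, Finset.mem_filter, Finset.mem_univ, true_and] at hq ⊢
      exact ⟨⟨⟨lt_trans hq.1 hq.2, not_lt.mpr (le_of_lt hq.1)⟩,
        fun h => absurd h.symm (ne_of_lt hq.1)⟩, hq.2⟩
    · intro q _
      rfl
    · intro q _
      rfl
    · intro q _
      rfl
  -- Piece 4 : `m = k`, identified with the pair set.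
  have h4 : (∑ q ∈ (((S.filter (fun q : Fin n × Fin n × Fin n => ¬ q.1 < q.2.1)).filter
        (fun q : Fin n × Fin n × Fin n => ¬ q.1 = q.2.1)).filter
        (fun q : Fin n × Fin n × Fin n => ¬ q.1 < q.2.2)).filter
        (fun q : Fin n × Fin n × Fin n => q.1 = q.2.2), f q.1 q.2) =
      ∑ p ∈ Finset.univ.filter (fun p : Fin n × Fin n => p.1 < p.2), f p.2 p := by
    apply Finset.sum_nbij' (fun q => q.2) (fun p => (p.2, p))
    · intro q hq
      simp only [hSdef, Finset.mem_filter, Finset.mem_univ, true_and] at hq ⊢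
      exact hq.1.1.1.1
    · intro p hp
      simp only [hSdef, Finset.mem_filter, Finset.mem_univ, true_and] at hp ⊢
      exact ⟨⟨⟨⟨hp, not_lt.mpr (le_of_lt hp)⟩, fun h => absurd h (ne_of_gt hp)⟩,
        lt_irrefl _⟩, trivial⟩
    · intro q hq
      simp only [hSdef, Finset.mem_filter] at hq
      exact Prod.ext hq.2.symm rfl
    · intro p _
      rfl
    · intro q hq
      simp only [hSdef, Finset.mem_filter] at hq
      rw [hq.2]
  -- Piece 5 : `m > k`, identified with the triple set.
  have h5 : (∑ q ∈ (((S.filter (fun q : Fin n × Fin n × Fin n => ¬ q.1 < q.2.1)).filter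
        (fun q : Fin n × Fin n × Fin n => ¬ q.1 = q.2.1)).filter
        (fun q : Fin n × Fin n × Fin n => ¬ q.1 < q.2.2)).filter
        (fun q : Fin n × Fin n × Fin n => ¬ q.1 = q.2.2), f q.1 q.2) =
      ∑ q ∈ Finset.univ.filter
          (fun q : Fin n × Fin n × Fin n => q.1 < q.2.1 ∧ q.2.1 < q.2.2),
        f q.2.2 (q.1, q.2.1) := by
    apply Finset.sum_nbij' (fun q => (q.2.1, (q.2.2, q.1)))
      (fun q => (q.2.2, (q.1, q.2.1)))
    · intro q hq
      simp only [hSdef, Finset.mem_filter, Finset.mem_univ, true_and] at hq ⊢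
      exact ⟨hq.1.1.1.1, lt_of_le_of_ne (not_lt.mp hq.1.2) (Ne.symm hq.2)⟩
    · intro q hq
      simp only [hSdef, Finset.mem_filter, Finset.mem_univ, true_and] at hq ⊢
      refine ⟨⟨⟨⟨hq.1, ?_⟩, ?_⟩, ?_⟩, ?_⟩
      · exact not_lt.mpr (le_of_lt (lt_trans hq.1 hq.2))
      · exact fun h => absurd h.symm (ne_of_lt (lt_trans hq.1 hq.2))
      · exact not_lt.mpr (le_of_lt hq.2)
      · exact fun h => absurd h.symm (ne_of_lt hq.2)
    · intro q _
      rfl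
    · intro q _
      rfl
    · intro q _
      rfl
  rw [← hsplit1, ← hsplit2, ← hsplit3, ← hsplit4, h1, h2, h3, h4, h5,
    Finset.sum_add_distrib, Finset.sum_add_distrib, Finset.sum_add_distrib]
  ring

/-- The pair sum over the subtype `PairIdx n` equals the corresponding filtered sum. -/
lemma pair_sum_eq {n : ℕ} (c : Fin n → Fin n → ℝ) (y : G n) :
    (∑ p ∈ Finset.univ.filter (fun p : Fin n × Fin n => p.1 < p.2),
      c p.1 p.2 * (vc y p.1 p.2 : ℝ)) =
    ∑ p : PairIdx n, c p.1.1 p.1.2 * (y.v p : ℝ) := by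
  refine (Finset.sum_subtype _ (fun p => ?_) _).trans
    (Finset.sum_congr rfl fun a _ => ?_)
  · simp
  · rw [vc, dif_pos a.2]

/-- The key computation: for a central element `s` the defect of symmetry of `σ_λ`
is given by the exponential of the matrix pairing. -/
lemma sigma_ratio {n : ℕ} (t : Fin n → Fin n → Fin n → ℝ)
    (lam : Fin n → Fin n → Fin n → Circle)
    (hlam : ∀ i j k : Fin n, lam i j k = Circle.exp (2 * Real.pi * t i j k))
    (hrel : ∀ i j k : Fin n, i < j → j < k → lam k i j = (lam i j k)⁻¹ * lam j i k)
    (s : G n) (hs : ∀ i, s.u i = 0) (r : G n) :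
    sigmaLam lam r s * (sigmaLam lam s r)⁻¹ =
      Circle.exp (2 * Real.pi * ∑ m : Fin n, (r.u m : ℝ) *
        ∑ p ∈ Finset.univ.filter (fun p : Fin n × Fin n => p.1 < p.2),
          t m p.1 p.2 * (vc s p.1 p.2 : ℝ)) := by
  classical
  -- abbreviations for the three exponent sums
  set A1 : ℝ := ∑ q ∈ Finset.univ.filter
      (fun q : Fin n × Fin n × Fin n => q.1 < q.2.1 ∧ q.2.1 < q.2.2),
    (((vc s q.2.1 q.2.2 * r.u q.1 : ℤ) : ℝ) * t q.1 q.2.1 q.2.2 +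
      ((vc s q.1 q.2.2 * r.u q.2.1 : ℤ) : ℝ) * t q.2.1 q.1 q.2.2) with hA1
  set A2 : ℝ := ∑ p ∈ Finset.univ.filter (fun p : Fin n × Fin n => p.1 < p.2),
    (((vc s p.1 p.2 * r.u p.1 : ℤ) : ℝ) * t p.1 p.1 p.2 +
      ((r.u p.2 * vc s p.1 p.2 : ℤ) : ℝ) * t p.2 p.1 p.2) with hA2
  set A3 : ℝ := ∑ q ∈ Finset.univ.filter
      (fun q : Fin n × Fin n × Fin n => q.1 < q.2.1 ∧ q.2.1 < q.2.2),
    (-((r.u q.2.2 * vc s q.1 q.2.1 : ℤ) : ℝ)) * t q.2.2 q.1 q.2.1 with hA3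
  have hrs : sigmaLam lam r s = Circle.exp (2 * Real.pi * (A1 + A2)) := by
    rw [sigmaLam]
    have hT : ∀ q ∈ Finset.univ.filter
        (fun q : Fin n × Fin n × Fin n => q.1 < q.2.1 ∧ q.2.1 < q.2.2),
        lam q.1 q.2.1 q.2.2 ^ (vc s q.2.1 q.2.2 * uc r q.1 + uc s q.2.2 * vc r q.1 q.2.1) *
          lam q.2.1 q.1 q.2.2 ^ (vc s q.1 q.2.2 * uc r q.2.1 +
            uc s q.2.2 * (uc r q.1 * uc r q.2.1 - vc r q.1 q.2.1)) =
        Circle.exp (2 * Real.pi * (((vc s q.2.1 q.2.2 * r.u q.1 : ℤ) : ℝ) * t q.1 q.2.1 q.2.2 +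
          ((vc s q.1 q.2.2 * r.u q.2.1 : ℤ) : ℝ) * t q.2.1 q.1 q.2.2)) := by
      intro q _
      simp only [uc, hs, zero_mul, mul_zero, add_zero]
      rw [hlam, hlam, cexp_zpow, cexp_zpow, ← Circle.exp_add]
      congr 1
      push_cast
      ring
    have hP : ∀ p ∈ Finset.univ.filter (fun p : Fin n × Fin n => p.1 < p.2),
        lam p.1 p.1 p.2 ^ (vc s p.1 p.2 * uc r p.1 +
            uc s p.2 * (uc r p.1 * (uc r p.1 - 1) / 2)) *
          lam p.2 p.1 p.2 ^ (uc r p.2 * (vc s p.1 p.2 + uc r p.1 * uc s p.2) +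
            uc r p.1 * (uc s p.2 * (uc s p.2 - 1) / 2)) =
        Circle.exp (2 * Real.pi * (((vc s p.1 p.2 * r.u p.1 : ℤ) : ℝ) * t p.1 p.1 p.2 +
          ((r.u p.2 * vc s p.1 p.2 : ℤ) : ℝ) * t p.2 p.1 p.2)) := by
      intro p _
      simp only [uc, hs, zero_mul, mul_zero, add_zero, Int.zero_ediv, zero_sub, neg_zero]
      rw [hlam, hlam, cexp_zpow, cexp_zpow, ← Circle.exp_add]
      congr 1
      push_cast
      ring
    rw [Finset.prod_congr rfl hT, Finset.prod_congr rfl hP, cexp_sum, cexp_sum,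
      ← Circle.exp_add, hA1, hA2, ← Finset.mul_sum, ← Finset.mul_sum, ← mul_add]
  have hsr : sigmaLam lam s r = Circle.exp (2 * Real.pi * A3) := by
    rw [sigmaLam]
    have hT : ∀ q ∈ Finset.univ.filter
        (fun q : Fin n × Fin n × Fin n => q.1 < q.2.1 ∧ q.2.1 < q.2.2),
        lam q.1 q.2.1 q.2.2 ^ (vc r q.2.1 q.2.2 * uc s q.1 + uc r q.2.2 * vc s q.1 q.2.1) *
          lam q.2.1 q.1 q.2.2 ^ (vc r q.1 q.2.2 * uc s q.2.1 +
            uc r q.2.2 * (uc s q.1 * uc s q.2.1 - vc s q.1 q.2.1)) =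
        Circle.exp (2 * Real.pi *
          ((-((r.u q.2.2 * vc s q.1 q.2.1 : ℤ) : ℝ)) * t q.2.2 q.1 q.2.1)) := by
      intro q hq
      simp only [Finset.mem_filter, Finset.mem_univ, true_and] at hq
      simp only [uc, hs, zero_mul, mul_zero, add_zero, zero_add, zero_sub, mul_neg]
      have hinv : lam q.1 q.2.1 q.2.2 * (lam q.2.1 q.1 q.2.2)⁻¹ =
          (lam q.2.2 q.1 q.2.1)⁻¹ := by
        rw [hrel q.1 q.2.1 q.2.2 hq.1 hq.2, mul_inv_rev, inv_inv, mul_comm]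
      rw [zpow_neg, ← inv_zpow, ← mul_zpow, hinv, inv_zpow, ← zpow_neg, hlam, cexp_zpow]
      congr 1
      push_cast
      ring
    have hP : ∀ p ∈ Finset.univ.filter (fun p : Fin n × Fin n => p.1 < p.2),
        lam p.1 p.1 p.2 ^ (vc r p.1 p.2 * uc s p.1 +
            uc r p.2 * (uc s p.1 * (uc s p.1 - 1) / 2)) *
          lam p.2 p.1 p.2 ^ (uc s p.2 * (vc r p.1 p.2 + uc s p.1 * uc r p.2) +
            uc s p.1 * (uc r p.2 * (uc r p.2 - 1) / 2)) = (1 : Circle) := by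
      intro p _
      simp only [uc, hs, zero_mul, mul_zero, add_zero, zero_add, zero_sub, Int.zero_ediv,
        zpow_zero, one_mul, mul_one]
    rw [Finset.prod_congr rfl hT, Finset.prod_congr rfl hP, cexp_sum, Finset.prod_const_one,
      mul_one, hA3, ← Finset.mul_sum]
  rw [hrs, hsr, ← div_eq_mul_inv, ← Circle.exp_sub]
  congr 1
  have hsum : A1 + A2 - A3 = ∑ m : Fin n, (r.u m : ℝ) *
      ∑ p ∈ Finset.univ.filter (fun p : Fin n × Fin n => p.1 < p.2),
        t m p.1 p.2 * (vc s p.1 p.2 : ℝ) := by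
    rw [show (∑ m : Fin n, (r.u m : ℝ) *
        ∑ p ∈ Finset.univ.filter (fun p : Fin n × Fin n => p.1 < p.2),
          t m p.1 p.2 * (vc s p.1 p.2 : ℝ)) =
        ∑ m : Fin n, ∑ p ∈ Finset.univ.filter (fun p : Fin n × Fin n => p.1 < p.2),
          (r.u m : ℝ) * (t m p.1 p.2 * (vc s p.1 p.2 : ℝ)) from
      Finset.sum_congr rfl (fun m _ => Finset.mul_sum _ _ _)]
    rw [sum_over_pairs (fun m p => (r.u m : ℝ) * (t m p.1 p.2 * (vc s p.1 p.2 : ℝ)))]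
    rw [hA1, hA2, hA3, add_sub_right_comm, ← Finset.sum_sub_distrib]
    congr 1
    · exact Finset.sum_congr rfl (fun q _ => by push_cast; ring)
    · exact Finset.sum_congr rfl (fun p _ => by push_cast; ring)
  rw [← hsum]
  ring

end Helpers

/-- the matrix criterion: triviality of the `σ_λ`-regular central
elements is equivalent to `T⁻¹(ℤⁿ) ∩ ℤ^{n(n-1)/2} = {0}`, and to
`T(ℤ^{n(n-1)/2} ∖ {0}) ∩ ℤⁿ = ∅`. -/
theorem simplicity_matrix_criterion (n : ℕ) (hn : 2 ≤ n)
    (t : Fin n → Fin n → Fin n → ℝ)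
    (ht : ∀ i j k : Fin n, j < k → t i j k ∈ Set.Ico (0 : ℝ) 1)
    (lam : Fin n → Fin n → Fin n → Circle)
    (hlam : ∀ i j k : Fin n, lam i j k = Circle.exp (2 * Real.pi * t i j k))
    (hrel : ∀ i j k : Fin n, i < j → j < k → lam k i j = (lam i j k)⁻¹ * lam j i k) :
    ((∀ s : G n, (∀ i, s.u i = 0) →
        (∀ r : G n, sigmaLam lam s r = sigmaLam lam r s) → s = 1) ↔
      ∀ x : PairIdx n → ℤ,
        (∀ i : Fin n, ∃ m : ℤ,
          ∑ p : PairIdx n, t i p.1.1 p.1.2 * (x p : ℝ) = (m : ℝ)) → x = 0) ∧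
    ((∀ x : PairIdx n → ℤ,
        (∀ i : Fin n, ∃ m : ℤ,
          ∑ p : PairIdx n, t i p.1.1 p.1.2 * (x p : ℝ) = (m : ℝ)) → x = 0) ↔
      ∀ x : PairIdx n → ℤ, x ≠ 0 →
        ¬ ∀ i : Fin n, ∃ m : ℤ,
            ∑ p : PairIdx n, t i p.1.1 p.1.2 * (x p : ℝ) = (m : ℝ)) := by
  constructor
  · constructor
    · -- (i) → (ii)
      intro hreg x hx
      set s : G n := ⟨fun _ => 0, x⟩ with hsdef
      have hs1 : s = 1 := by
        apply hreg s (fun i => rfl)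
        intro r
        have hr := sigma_ratio t lam hlam hrel s (fun i => rfl) r
        choose k hk using hx
        have hx' : ∀ m : Fin n,
            (∑ p ∈ Finset.univ.filter (fun p : Fin n × Fin n => p.1 < p.2),
              t m p.1 p.2 * (vc s p.1 p.2 : ℝ)) = (k m : ℝ) := fun m => by
          rw [pair_sum_eq (t m) s]; exact hk m
        have h2 : (∑ m : Fin n, (r.u m : ℝ) *
            ∑ p ∈ Finset.univ.filter (fun p : Fin n × Fin n => p.1 < p.2),
              t m p.1 p.2 * (vc s p.1 p.2 : ℝ)) =
            ((∑ m : Fin n, r.u m * k m : ℤ) : ℝ) := by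
          push_cast
          exact Finset.sum_congr rfl fun m _ => by rw [hx' m]
        rw [h2] at hr
        have h3 : sigmaLam lam r s * (sigmaLam lam s r)⁻¹ = 1 := by
          rw [hr]; exact Circle.exp_two_pi_mul_int _
        exact (mul_inv_eq_one.mp h3).symm
      funext p
      exact congrFun (congrArg G.v hs1) p
    · -- (ii) → (i)
      intro hcrit s hsu hreg
      have hx : s.v = 0 := by
        refine hcrit s.v fun i => ?_
        have hr := sigma_ratio t lam hlam hrel s hsu (uE i)
        have h1 : sigmaLam lam (uE i) s * (sigmaLam lam s (uE i))⁻¹ = 1 :=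
          mul_inv_eq_one.mpr (hreg (uE i)).symm
        rw [h1] at hr
        have h2 : (∑ m : Fin n, ((uE i : G n).u m : ℝ) *
            ∑ p ∈ Finset.univ.filter (fun p : Fin n × Fin n => p.1 < p.2),
              t m p.1 p.2 * (vc s p.1 p.2 : ℝ)) =
            ∑ p ∈ Finset.univ.filter (fun p : Fin n × Fin n => p.1 < p.2),
              t i p.1 p.2 * (vc s p.1 p.2 : ℝ) := by
          rw [Finset.sum_eq_single i]
          · simp [uE]
          · intro b _ hb
            simp [uE, hb]
          · intro h
            exact absurd (Finset.mem_univ i) h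
        rw [h2] at hr
        obtain ⟨m, hm⟩ := Circle.exp_eq_one.mp hr.symm
        refine ⟨m, ?_⟩
        rw [← pair_sum_eq (t i) s]
        have hpi : (2 * Real.pi) ≠ 0 := by positivity
        rw [mul_comm (m : ℝ) (2 * Real.pi)] at hm
        exact mul_left_cancel₀ hpi hm
      exact G.ext (funext hsu) hx
  · constructor
    · intro h x hne hall
      exact hne (h x hall)
    · intro h x hall
      by_contra hne
      exact h x hne hall

end FreeNilp
end

section
/- Let n ≥ 2, let t_{i,jk} ∈ [0,1) for 1 ≤ i ≤ n and 1 ≤ j < k ≤ n, and set λ_{i,jk} := e^{2πi t_{i,jk}}. Suppose there exists an index i, 1 ≤ i ≤ n, such that the real numbers {t_{i,jk} : 1 ≤ j < k ≤ n} together with 1 are linearly independent over ℚ (in particular each t_{i,jk} is irrational). Then the identity is the only σ_λ-regular central element of G(n). -/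
open scoped BigOperators

namespace FreeNilp

section CircleAux

lemma circle_exp_zpow (x : ℝ) (c : ℤ) : Circle.exp x ^ c = Circle.exp (c * x) := by
  induction c using Int.induction_on with
  | zero => simp [Circle.exp_zero]
  | succ k ih =>
      rw [zpow_add_one, ih]
      push_cast
      rw [add_mul, one_mul, Circle.exp_add]
  | pred k ih =>
      rw [zpow_sub_one, ih]
      push_cast
      rw [sub_mul, one_mul, Circle.exp_sub, div_eq_mul_inv]

lemma circle_exp_sum {α : Type*} (A : Finset α) (f : α → ℝ) :
    Circle.exp (∑ x ∈ A, f x) = ∏ x ∈ A, Circle.exp (f x) := by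
  classical
  induction A using Finset.cons_induction with
  | empty => simp [Circle.exp_zero]
  | cons x A hx ih => rw [Finset.sum_cons, Finset.prod_cons, Circle.exp_add, ih]

end CircleAux

namespace FreeNilpAux

lemma uc_uE {n : ℕ} (m i : Fin n) : uc (uE m) i = if i = m then 1 else 0 := rfl

lemma vc_uE {n : ℕ} (m j k : Fin n) : vc (uE m) j k = 0 := by
  unfold vc; split <;> rfl

/-- The basic factor `λ_{m,jk}^{s_{jk}}`. -/
noncomputable def Fm {n : ℕ} (lam : Fin n → Fin n → Fin n → Circle) (s : G n) (m : Fin n)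
    (p : Fin n × Fin n) : Circle := lam m p.1 p.2 ^ (vc s p.1 p.2)

lemma key_prod {n : ℕ} (lam : Fin n → Fin n → Fin n → Circle)
    (hrel : ∀ i j k : Fin n, i < j → j < k → lam k i j = (lam i j k)⁻¹ * lam j i k)
    (s : G n) (hsu : ∀ i, s.u i = 0) (m : Fin n)
    (heq : sigmaLam lam s (uE m) = sigmaLam lam (uE m) s) :
    ∏ p ∈ Finset.univ.filter (fun p : Fin n × Fin n => p.1 < p.2), Fm lam s m p = 1 := by
  classical
  have hus : ∀ i, uc s i = 0 := hsu
  -- Left-hand side of the regularity identity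
  have hA : sigmaLam lam s (uE m)
      = ∏ p ∈ Finset.univ.filter (fun p : Fin n × Fin n => p.1 < p.2),
          (if p.2 < m then (Fm lam s m p)⁻¹ else 1) := by
    unfold sigmaLam
    have h2 : (∏ p ∈ Finset.univ.filter (fun p : Fin n × Fin n => p.1 < p.2),
        lam p.1 p.1 p.2 ^ (vc (uE m) p.1 p.2 * uc s p.1 +
          uc (uE m) p.2 * (uc s p.1 * (uc s p.1 - 1) / 2)) *
        lam p.2 p.1 p.2 ^ (uc s p.2 * (vc (uE m) p.1 p.2 + uc s p.1 * uc (uE m) p.2) +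
          uc s p.1 * (uc (uE m) p.2 * (uc (uE m) p.2 - 1) / 2))) = 1 :=
      Finset.prod_eq_one fun p _ => by simp [hus, vc_uE, uc_uE]
    rw [h2, mul_one]
    have h1 : ∀ t ∈ Finset.univ.filter
        (fun t : Fin n × Fin n × Fin n => t.1 < t.2.1 ∧ t.2.1 < t.2.2),
        lam t.1 t.2.1 t.2.2 ^ (vc (uE m) t.2.1 t.2.2 * uc s t.1 +
            uc (uE m) t.2.2 * vc s t.1 t.2.1) *
          lam t.2.1 t.1 t.2.2 ^ (vc (uE m) t.1 t.2.2 * uc s t.2.1 +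
            uc (uE m) t.2.2 * (uc s t.1 * uc s t.2.1 - vc s t.1 t.2.1)) =
        (if t.2.2 = m then (lam m t.1 t.2.1 ^ (vc s t.1 t.2.1))⁻¹ else 1) := by
      intro t ht
      simp only [Finset.mem_filter, Finset.mem_univ, true_and] at ht
      by_cases h : t.2.2 = m
      · rw [if_pos h]
        have e := hrel t.1 t.2.1 m ht.1 (h ▸ ht.2)
        rw [h]
        simp [vc_uE, uc_uE, hus, e, mul_zpow, zpow_neg, inv_zpow, mul_inv]
        exact mul_comm _ _
      · rw [if_neg h]
        simp [vc_uE, uc_uE, hus, h]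
    rw [Finset.prod_congr rfl h1, ← Finset.prod_filter, ← Finset.prod_filter]
    refine Finset.prod_nbij' (fun t => (t.1, t.2.1)) (fun p => (p.1, p.2, m)) ?_ ?_ ?_ ?_ ?_
    · rintro ⟨a, b, c⟩ ht
      simp only [Finset.mem_filter, Finset.mem_univ, true_and] at ht ⊢
      exact ⟨ht.1.1, ht.2 ▸ ht.1.2⟩
    · rintro ⟨a, b⟩ hp
      simp only [Finset.mem_filter, Finset.mem_univ, true_and] at hp ⊢
      exact ⟨⟨hp.1, hp.2⟩, trivial⟩
    · rintro ⟨a, b, c⟩ ht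
      simp only [Finset.mem_filter, Finset.mem_univ, true_and] at ht
      rw [Prod.mk.injEq, Prod.mk.injEq]
      exact ⟨rfl, rfl, ht.2.symm⟩
    · rintro ⟨a, b⟩ hp; rfl
    · rintro ⟨a, b, c⟩ ht; rfl
  -- Right-hand side of the regularity identity
  have hB : sigmaLam lam (uE m) s
      = ((∏ p ∈ Finset.univ.filter (fun p : Fin n × Fin n => p.1 < p.2),
            (if m < p.1 then Fm lam s m p else 1)) *
         (∏ p ∈ Finset.univ.filter (fun p : Fin n × Fin n => p.1 < p.2),
            (if p.1 < m ∧ m < p.2 then Fm lam s m p else 1))) *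
        ((∏ p ∈ Finset.univ.filter (fun p : Fin n × Fin n => p.1 < p.2),
            (if p.1 = m then Fm lam s m p else 1)) *
         (∏ p ∈ Finset.univ.filter (fun p : Fin n × Fin n => p.1 < p.2),
            (if p.2 = m then Fm lam s m p else 1))) := by
    unfold sigmaLam
    rw [Finset.prod_mul_distrib, Finset.prod_mul_distrib]
    refine congrArg₂ (· * ·) (congrArg₂ (· * ·) ?_ ?_) (congrArg₂ (· * ·) ?_ ?_)
    · have h1 : ∀ t ∈ Finset.univ.filter
          (fun t : Fin n × Fin n × Fin n => t.1 < t.2.1 ∧ t.2.1 < t.2.2),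
          lam t.1 t.2.1 t.2.2 ^ (vc s t.2.1 t.2.2 * uc (uE m) t.1 +
            uc s t.2.2 * vc (uE m) t.1 t.2.1) =
          (if t.1 = m then lam t.1 t.2.1 t.2.2 ^ (vc s t.2.1 t.2.2) else 1) := by
        intro t ht
        by_cases h : t.1 = m <;> simp [h, hus, vc_uE, uc_uE]
      rw [Finset.prod_congr rfl h1, ← Finset.prod_filter, ← Finset.prod_filter]
      refine Finset.prod_nbij' (fun t => t.2) (fun p => (m, p)) ?_ ?_ ?_ ?_ ?_
      · rintro ⟨a, b, c⟩ ht
        simp only [Finset.mem_filter, Finset.mem_univ, true_and] at ht ⊢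
        exact ⟨ht.1.2, ht.2 ▸ ht.1.1⟩
      · rintro ⟨a, b⟩ hp
        simp only [Finset.mem_filter, Finset.mem_univ, true_and] at hp ⊢
        exact ⟨⟨hp.2, hp.1⟩, trivial⟩
      · rintro ⟨a, b, c⟩ ht
        simp only [Finset.mem_filter, Finset.mem_univ, true_and] at ht
        rw [Prod.mk.injEq]
        exact ⟨ht.2.symm, rfl⟩
      · rintro ⟨a, b⟩ hp; rfl
      · rintro ⟨a, b, c⟩ ht
        simp only [Finset.mem_filter, Finset.mem_univ, true_and] at ht
        rw [ht.2]
        rfl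
    · have h1 : ∀ t ∈ Finset.univ.filter
          (fun t : Fin n × Fin n × Fin n => t.1 < t.2.1 ∧ t.2.1 < t.2.2),
          lam t.2.1 t.1 t.2.2 ^ (vc s t.1 t.2.2 * uc (uE m) t.2.1 +
            uc s t.2.2 * (uc (uE m) t.1 * uc (uE m) t.2.1 - vc (uE m) t.1 t.2.1)) =
          (if t.2.1 = m then lam t.2.1 t.1 t.2.2 ^ (vc s t.1 t.2.2) else 1) := by
        intro t ht
        by_cases h : t.2.1 = m <;> simp [h, hus, vc_uE, uc_uE]
      rw [Finset.prod_congr rfl h1, ← Finset.prod_filter, ← Finset.prod_filter]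
      refine Finset.prod_nbij' (fun t => (t.1, t.2.2)) (fun p => (p.1, m, p.2)) ?_ ?_ ?_ ?_ ?_
      · rintro ⟨a, b, c⟩ ht
        simp only [Finset.mem_filter, Finset.mem_univ, true_and] at ht ⊢
        exact ⟨ht.1.1.trans ht.1.2, ht.2 ▸ ht.1.1, ht.2 ▸ ht.1.2⟩
      · rintro ⟨a, b⟩ hp
        simp only [Finset.mem_filter, Finset.mem_univ, true_and] at hp ⊢
        exact ⟨⟨hp.2.1, hp.2.2⟩, trivial⟩
      · rintro ⟨a, b, c⟩ ht
        simp only [Finset.mem_filter, Finset.mem_univ, true_and] at ht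
        rw [Prod.mk.injEq, Prod.mk.injEq]
        exact ⟨rfl, ht.2.symm, rfl⟩
      · rintro ⟨a, b⟩ hp; rfl
      · rintro ⟨a, b, c⟩ ht
        simp only [Finset.mem_filter, Finset.mem_univ, true_and] at ht
        rw [ht.2]
        rfl
    · refine Finset.prod_congr rfl fun p hp => ?_
      by_cases h : p.1 = m <;> simp [Fm, h, hus, vc_uE, uc_uE]
    · refine Finset.prod_congr rfl fun p hp => ?_
      by_cases h : p.2 = m <;> simp [Fm, h, hus, vc_uE, uc_uE]
  rw [hA, hB] at heq
  have hsplit : ∀ p ∈ Finset.univ.filter (fun p : Fin n × Fin n => p.1 < p.2),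
      Fm lam s m p =
      (if p.2 < m then Fm lam s m p else 1) *
      (((if m < p.1 then Fm lam s m p else 1) *
        (if p.1 < m ∧ m < p.2 then Fm lam s m p else 1)) *
       ((if p.1 = m then Fm lam s m p else 1) *
        (if p.2 = m then Fm lam s m p else 1))) := by
    intro p hp
    have hp' : p.1 < p.2 := by simpa using hp
    rcases lt_trichotomy p.2 m with h2 | h2 | h2
    · rw [if_pos h2, if_neg (fun h => lt_asymm (hp'.trans h2) h),
        if_neg (fun h => lt_asymm h2 h.2), if_neg (ne_of_lt (hp'.trans h2)),
        if_neg (ne_of_lt h2)]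
      simp
    · have hpm : p.1 < m := lt_of_lt_of_eq hp' h2
      rw [if_neg (fun h => lt_irrefl m (lt_of_eq_of_lt h2.symm h)),
        if_neg (fun h => lt_asymm hpm h),
        if_neg (fun h => lt_irrefl m (lt_of_lt_of_eq h.2 h2)),
        if_neg (ne_of_lt hpm), if_pos h2]
      simp
    · rcases lt_trichotomy p.1 m with h1 | h1 | h1
      · rw [if_neg (fun h => lt_asymm h2 h), if_neg (fun h => lt_asymm h1 h),
          if_pos ⟨h1, h2⟩, if_neg (ne_of_lt h1), if_neg (ne_of_gt h2)]
        simp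
      · rw [if_neg (fun h => lt_asymm h2 h),
          if_neg (fun h => lt_irrefl m (lt_of_lt_of_eq h h1)),
          if_neg (fun h => lt_irrefl m (lt_of_eq_of_lt h1.symm h.1)), if_pos h1,
          if_neg (ne_of_gt h2)]
        simp
      · rw [if_neg (fun h => lt_asymm h2 h), if_pos h1,
          if_neg (fun h => lt_asymm h1 h.1), if_neg (ne_of_gt h1), if_neg (ne_of_gt h2)]
        simp
  calc ∏ p ∈ Finset.univ.filter (fun p : Fin n × Fin n => p.1 < p.2), Fm lam s m p
      = ∏ p ∈ Finset.univ.filter (fun p : Fin n × Fin n => p.1 < p.2),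
          ((if p.2 < m then Fm lam s m p else 1) *
          (((if m < p.1 then Fm lam s m p else 1) *
            (if p.1 < m ∧ m < p.2 then Fm lam s m p else 1)) *
          ((if p.1 = m then Fm lam s m p else 1) *
            (if p.2 = m then Fm lam s m p else 1)))) := Finset.prod_congr rfl hsplit
    _ = (∏ p ∈ Finset.univ.filter (fun p : Fin n × Fin n => p.1 < p.2),
          (if p.2 < m then Fm lam s m p else 1)) *
        (((∏ p ∈ Finset.univ.filter (fun p : Fin n × Fin n => p.1 < p.2),
            (if m < p.1 then Fm lam s m p else 1)) *
          (∏ p ∈ Finset.univ.filter (fun p : Fin n × Fin n => p.1 < p.2),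
            (if p.1 < m ∧ m < p.2 then Fm lam s m p else 1))) *
         ((∏ p ∈ Finset.univ.filter (fun p : Fin n × Fin n => p.1 < p.2),
            (if p.1 = m then Fm lam s m p else 1)) *
          (∏ p ∈ Finset.univ.filter (fun p : Fin n × Fin n => p.1 < p.2),
            (if p.2 = m then Fm lam s m p else 1)))) := by
        rw [Finset.prod_mul_distrib, Finset.prod_mul_distrib, Finset.prod_mul_distrib,
          Finset.prod_mul_distrib]
    _ = (∏ p ∈ Finset.univ.filter (fun p : Fin n × Fin n => p.1 < p.2),
          (if p.2 < m then Fm lam s m p else 1)) *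
        (∏ p ∈ Finset.univ.filter (fun p : Fin n × Fin n => p.1 < p.2),
          (if p.2 < m then (Fm lam s m p)⁻¹ else 1)) := by rw [← heq]
    _ = ∏ p ∈ Finset.univ.filter (fun p : Fin n × Fin n => p.1 < p.2),
          ((if p.2 < m then Fm lam s m p else 1) *
           (if p.2 < m then (Fm lam s m p)⁻¹ else 1)) := (Finset.prod_mul_distrib).symm
    _ = 1 := Finset.prod_eq_one fun p _ => by by_cases h : p.2 < m <;> simp [h]

end FreeNilpAux

/-- if for some row `i` the numbers `t_{i,jk}` together with `1` are
linearly independent over `ℚ`, then the identity is the only `σ_λ`-regular central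
element. -/
theorem only_trivial_regular_of_independent_row (n : ℕ) (hn : 2 ≤ n)
    (t : Fin n → Fin n → Fin n → ℝ)
    (ht : ∀ i j k : Fin n, j < k → t i j k ∈ Set.Ico (0 : ℝ) 1)
    (lam : Fin n → Fin n → Fin n → Circle)
    (hlam : ∀ i j k : Fin n, lam i j k = Circle.exp (2 * Real.pi * t i j k))
    (hrel : ∀ i j k : Fin n, i < j → j < k → lam k i j = (lam i j k)⁻¹ * lam j i k)
    (hind : ∃ i : Fin n,
      LinearIndependent ℚ (fun o : Option (PairIdx n) =>
        o.elim (1 : ℝ) fun p => t i p.1.1 p.1.2)) :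
    ∀ s : G n, (∀ i, s.u i = 0) →
      (∀ r : G n, sigmaLam lam s r = sigmaLam lam r s) → s = 1 := by
  intro s hsu hreg
  obtain ⟨i, hLI⟩ := hind
  have hkey := FreeNilpAux.key_prod lam hrel s hsu i (hreg (uE i))
  have hexp : Circle.exp (2 * Real.pi *
      ∑ p ∈ Finset.univ.filter (fun p : Fin n × Fin n => p.1 < p.2),
        (vc s p.1 p.2 : ℝ) * t i p.1 p.2) = 1 := by
    calc Circle.exp (2 * Real.pi *
        ∑ p ∈ Finset.univ.filter (fun p : Fin n × Fin n => p.1 < p.2),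
          (vc s p.1 p.2 : ℝ) * t i p.1 p.2)
        = ∏ p ∈ Finset.univ.filter (fun p : Fin n × Fin n => p.1 < p.2),
            FreeNilpAux.Fm lam s i p := by
          rw [Finset.mul_sum, circle_exp_sum]
          refine Finset.prod_congr rfl fun p _ => ?_
          show Circle.exp (2 * Real.pi * ((vc s p.1 p.2 : ℝ) * t i p.1 p.2))
            = lam i p.1 p.2 ^ (vc s p.1 p.2)
          rw [hlam, circle_exp_zpow]
          exact congrArg Circle.exp (by ring)
      _ = 1 := hkey
  obtain ⟨N, hN⟩ := Circle.exp_eq_exp.mp (hexp.trans Circle.exp_zero.symm)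
  have hT : ∑ p ∈ Finset.univ.filter (fun p : Fin n × Fin n => p.1 < p.2),
      (vc s p.1 p.2 : ℝ) * t i p.1 p.2 = (N : ℝ) := by
    have h2 : (2 * Real.pi) *
        (∑ p ∈ Finset.univ.filter (fun p : Fin n × Fin n => p.1 < p.2),
          (vc s p.1 p.2 : ℝ) * t i p.1 p.2) = (2 * Real.pi) * (N : ℝ) := by
      rw [hN]; ring
    exact mul_left_cancel₀ (by positivity) h2
  have hT2 : ∑ q : PairIdx n, (s.v q : ℝ) * t i q.1.1 q.1.2 = (N : ℝ) := by
    rw [← hT, Finset.sum_subtype (p := fun p : Fin n × Fin n => p.1 < p.2) (Finset.univ.filter (fun p : Fin n × Fin n => p.1 < p.2))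
      (fun p => by simp) (fun p : Fin n × Fin n => (vc s p.1 p.2 : ℝ) * t i p.1 p.2)]
    exact Finset.sum_congr rfl fun q _ => by
      rw [show vc s q.1.1 q.1.2 = s.v q from dif_pos q.2]
  rw [Fintype.linearIndependent_iff] at hLI
  have h0 : ∑ o : Option (PairIdx n),
      (Option.elim o (-(N : ℚ)) fun q => (s.v q : ℚ)) •
        (Option.elim o (1 : ℝ) fun p => t i p.1.1 p.1.2) = 0 := by
    rw [Fintype.sum_option]
    simp only [Option.elim]
    have hq : ∀ q : PairIdx n,
        ((s.v q : ℚ)) • t i q.1.1 q.1.2 = (s.v q : ℝ) * t i q.1.1 q.1.2 := fun q => by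
      rw [Rat.smul_def]; push_cast; ring
    rw [Finset.sum_congr rfl (fun q _ => hq q), hT2, Rat.smul_def]
    push_cast
    ring
  have hall := hLI (fun o => Option.elim o (-(N : ℚ)) fun q => (s.v q : ℚ)) h0
  have hv : ∀ p : PairIdx n, s.v p = 0 := by
    intro p
    have h := hall (some p)
    simpa using h
  refine G.ext ?_ ?_ <;> funext x
  · exact hsu x
  · exact hv x


end FreeNilp
end

section
/- Let n ≥ 2, let λ = (λ_{i,jk}) be a family of elements of 𝕋 indexed by 1 ≤ i ≤ k and 1 ≤ j < k ≤ n, and let φ be an automorphism of G(n) such that φ(v_{jk}) = v_{jk} for all 1 ≤ j < k ≤ n and φ(u_i) = z_i u_i for some central elements z_i ∈ V(n) (1 ≤ i ≤ n). Then the multiplier σ_λ∘(φ×φ) of G(n), defined by (r,s) ↦ σ_λ(φ(r), φ(s)), is similar to σ_λ. -/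
open scoped BigOperators

namespace FreeNilp

section AuxSt18
variable {n : ℕ}

lemma zpow_sum' {ι : Type*} (x : Circle) (F : Finset ι) (f : ι → ℤ) :
    x ^ (∑ i ∈ F, f i) = ∏ i ∈ F, x ^ f i := by
  induction F using Finset.cons_induction with
  | empty => simp
  | cons a F ha ih => rw [Finset.sum_cons, Finset.prod_cons, zpow_add, ih]

/-- `u_i^m` as an explicit element. -/
def uD (i : Fin n) (m : ℤ) : G n := ⟨fun j => if j = i then m else 0, fun _ => 0⟩

lemma uD_mul (i : Fin n) (m m' : ℤ) : uD i m * uD i m' = uD i (m + m') := by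
  refine G.ext ?_ ?_ <;> funext p
  · show (if p = i then m else 0) + (if p = i then m' else 0) = if p = i then m + m' else 0
    split <;> simp
  · show 0 + 0 + (if p.1.1 = i then m else 0) * (if p.1.2 = i then m' else 0) = 0
    rcases eq_or_ne p.1.1 i with h1 | h1
    · rcases eq_or_ne p.1.2 i with h2 | h2
      · exact absurd (h1.trans h2.symm) (ne_of_lt p.2)
      · simp [h2]
    · simp [h1]

lemma uD_zero (i : Fin n) : uD i 0 = (1 : G n) := by
  refine G.ext ?_ ?_ <;> funext p
  · show (if p = i then (0:ℤ) else 0) = 0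
    split <;> rfl
  · rfl

lemma uD_inv (i : Fin n) (m : ℤ) : (uD i m)⁻¹ = uD i (-m) := by
  refine G.ext ?_ ?_ <;> funext p
  · show -(if p = i then m else 0) = if p = i then -m else 0
    split <;> simp
  · show -(0:ℤ) + (if p.1.1 = i then m else 0) * (if p.1.2 = i then m else 0) = 0
    rcases eq_or_ne p.1.1 i with h1 | h1
    · rcases eq_or_ne p.1.2 i with h2 | h2
      · exact absurd (h1.trans h2.symm) (ne_of_lt p.2)
      · simp [h2]
    · simp [h1]

lemma uE_eq_uD (i : Fin n) : (uE i : G n) = uD i 1 := rfl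

lemma uE_zpow (i : Fin n) (m : ℤ) : (uE i : G n) ^ m = uD i m := by
  induction m using Int.induction_on with
  | zero => rw [zpow_zero, uD_zero]
  | succ k ih => rw [zpow_add_one, ih, uE_eq_uD, uD_mul]
  | pred k ih =>
      rw [zpow_sub_one, ih, uE_eq_uD, uD_inv, uD_mul]
      exact congrArg _ (by ring)

/-- `v_q^m` as an explicit element. -/
def vD (q : Fin n × Fin n) (m : ℤ) : G n := ⟨fun _ => 0, fun p => if p.1 = q then m else 0⟩

lemma vD_mul (q : Fin n × Fin n) (m m' : ℤ) : vD q m * vD q m' = vD q (m + m') := by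
  refine G.ext ?_ ?_ <;> funext p
  · show (0:ℤ) + 0 = 0
    simp
  · show (if p.1 = q then m else 0) + (if p.1 = q then m' else 0) + 0 * 0 =
      if p.1 = q then m + m' else 0
    split <;> simp

lemma vD_zero (q : Fin n × Fin n) : vD q 0 = (1 : G n) := by
  refine G.ext ?_ ?_ <;> funext p
  · rfl
  · show (if p.1 = q then (0:ℤ) else 0) = 0
    split <;> rfl

lemma vD_inv (q : Fin n × Fin n) (m : ℤ) : (vD q m)⁻¹ = vD q (-m) := by
  refine G.ext ?_ ?_ <;> funext p
  · show -(0:ℤ) = 0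
    simp
  · show -(if p.1 = q then m else 0) + 0 * 0 = if p.1 = q then -m else 0
    split <;> simp

lemma vE_eq_vD (j k : Fin n) : (vE j k : G n) = vD (j, k) 1 := rfl

lemma vE_zpow (j k : Fin n) (m : ℤ) : (vE j k : G n) ^ m = vD (j, k) m := by
  induction m using Int.induction_on with
  | zero => rw [zpow_zero, vD_zero]
  | succ l ih => rw [zpow_add_one, ih, vE_eq_vD, vD_mul]
  | pred l ih =>
      rw [zpow_sub_one, ih, vE_eq_vD, vD_inv, vD_mul]
      exact congrArg _ (by ring)

/-- A central element with given `v`-part. -/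
def zDc (w : PairIdx n → ℤ) : G n := ⟨fun _ => 0, w⟩

lemma zDc_mul (w w' : PairIdx n → ℤ) : zDc w * zDc w' = zDc (fun p => w p + w' p) := by
  refine G.ext ?_ ?_ <;> funext p
  · show (0:ℤ) + 0 = 0
    simp
  · show w p + w' p + 0 * 0 = w p + w' p
    ring

lemma zDc_zero : zDc (fun _ => (0:ℤ)) = (1 : G n) := rfl

lemma central_eq_zDc (x : G n) (hx : ∀ j, x.u j = 0) : x = zDc x.v := by
  refine G.ext ?_ ?_ <;> funext p
  · exact hx p
  · rfl

lemma zDc_inv (w : PairIdx n → ℤ) : (zDc w)⁻¹ = zDc (fun p => -w p) := by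
  refine G.ext ?_ ?_ <;> funext p
  · show -(0:ℤ) = 0
    simp
  · show -w p + 0 * 0 = -w p
    ring

lemma zDc_zpow (w : PairIdx n → ℤ) (m : ℤ) : (zDc w) ^ m = zDc (fun p => m * w p) := by
  induction m using Int.induction_on with
  | zero => rw [zpow_zero]; simp [zDc_zero]
  | succ l ih =>
      rw [zpow_add_one, ih, zDc_mul]
      refine congrArg zDc (funext fun p => by ring)
  | pred l ih =>
      rw [zpow_sub_one, ih, zDc_inv, zDc_mul]
      refine congrArg zDc (funext fun p => by ring)

lemma central_comm (x y : G n) (hx : ∀ j, x.u j = 0) : x * y = y * x := by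
  refine G.ext ?_ ?_ <;> funext p
  · show x.u p + y.u p = y.u p + x.u p
    ring
  · show x.v p + y.v p + x.u p.1.1 * y.u p.1.2 = y.v p + x.v p + y.u p.1.1 * x.u p.1.2
    rw [hx p.1.1, hx p.1.2]
    ring

/-- The "word element" with given `u`-part. -/
def Wl (m : Fin n → ℤ) : G n := ⟨m, fun p => m p.1.1 * m p.1.2⟩

/-- The homomorphism `ψ` associated to central data `c`. -/
def psiC (c : Fin n → PairIdx n → ℤ) (r : G n) : G n :=
  ⟨r.u, fun p => r.v p + ∑ a, r.u a * c a p⟩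

lemma Wl_step (m : Fin n → ℤ) (q : Fin n) (hq : ∀ i : Fin n, q < i → m i = 0) :
    Wl m = Wl (Function.update m q 0) * uD q (m q) := by
  refine G.ext ?_ ?_ <;> funext p
  · show m p = Function.update m q 0 p + (if p = q then m q else 0)
    rcases eq_or_ne p q with h | h
    · subst h; simp
    · simp [Function.update_of_ne h, h]
  · show m p.1.1 * m p.1.2 =
      Function.update m q 0 p.1.1 * Function.update m q 0 p.1.2 +
        0 + Function.update m q 0 p.1.1 * (if p.1.2 = q then m q else 0)
    have hlt : p.1.1 < p.1.2 := p.2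
    rcases eq_or_ne p.1.2 q with h2 | h2
    · have h1 : p.1.1 ≠ q := by rw [← h2]; exact ne_of_lt hlt
      rw [if_pos h2, Function.update_of_ne h1, h2, Function.update_self]
      ring
    · rw [if_neg h2, Function.update_of_ne h2]
      rcases eq_or_ne p.1.1 q with h1 | h1
      · have : m p.1.2 = 0 := hq p.1.2 (h1 ▸ hlt)
        rw [this, h1, Function.update_self]
        ring
      · rw [Function.update_of_ne h1]
        ring

lemma psiC_Wl_step (c : Fin n → PairIdx n → ℤ) (m : Fin n → ℤ) (q : Fin n)
    (hq : ∀ i : Fin n, q < i → m i = 0) :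
    psiC c (Wl (Function.update m q 0)) * (zDc (fun p => m q * c q p) * uD q (m q)) =
      psiC c (Wl m) := by
  refine G.ext ?_ ?_ <;> funext p
  · show Function.update m q 0 p + (0 + (if p = q then m q else 0)) = m p
    rcases eq_or_ne p q with h | h
    · subst h; simp
    · simp [Function.update_of_ne h, h]
  · have hzu : ∀ j, (zDc (fun p => m q * c q p) * uD q (m q)).u j
        = (if j = q then m q else 0) := by
      intro j
      show (0:ℤ) + (if j = q then m q else 0) = _
      ring
    show (Function.update m q 0 p.1.1 * Function.update m q 0 p.1.2 +
        ∑ a, Function.update m q 0 a * c a p) +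
        ((m q * c q p + 0 + 0 * (if p.1.2 = q then m q else 0))) +
        Function.update m q 0 p.1.1 * (0 + (if p.1.2 = q then m q else 0)) =
      m p.1.1 * m p.1.2 + ∑ a, m a * c a p
    have hsum : (∑ a, Function.update m q 0 a * c a p) + m q * c q p
        = ∑ a, m a * c a p := by
      rw [← Finset.add_sum_erase Finset.univ (fun a => m a * c a p) (Finset.mem_univ q),
        ← Finset.add_sum_erase Finset.univ
          (fun a => Function.update m q 0 a * c a p) (Finset.mem_univ q)]
      rw [Function.update_self]
      have : ∑ a ∈ Finset.univ.erase q, Function.update m q 0 a * c a p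
          = ∑ a ∈ Finset.univ.erase q, m a * c a p := by
        refine Finset.sum_congr rfl fun a ha => ?_
        rw [Function.update_of_ne (Finset.ne_of_mem_erase ha)]
      rw [this]
      ring
    have hword : Function.update m q 0 p.1.1 * Function.update m q 0 p.1.2 +
        Function.update m q 0 p.1.1 * (if p.1.2 = q then m q else 0)
        = m p.1.1 * m p.1.2 := by
      have hlt : p.1.1 < p.1.2 := p.2
      rcases eq_or_ne p.1.2 q with h2 | h2
      · have h1 : p.1.1 ≠ q := by rw [← h2]; exact ne_of_lt hlt
        rw [if_pos h2, Function.update_of_ne h1, h2, Function.update_self]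
        ring
      · rw [if_neg h2, Function.update_of_ne h2]
        rcases eq_or_ne p.1.1 q with h1 | h1
        · have : m p.1.2 = 0 := hq p.1.2 (h1 ▸ hlt)
          rw [this, h1, Function.update_self]
          ring
        · rw [Function.update_of_ne h1]
          ring
    calc _ = (Function.update m q 0 p.1.1 * Function.update m q 0 p.1.2 +
          Function.update m q 0 p.1.1 * (if p.1.2 = q then m q else 0)) +
          ((∑ a, Function.update m q 0 a * c a p) + m q * c q p) := by ring
    _ = m p.1.1 * m p.1.2 + ∑ a, m a * c a p := by rw [hsum, hword]

lemma psiC_one (c : Fin n → PairIdx n → ℤ) : psiC c 1 = 1 := by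
  refine G.ext ?_ ?_ <;> funext p
  · rfl
  · show (0:ℤ) + ∑ a : Fin n, (0:ℤ) * c a p = 0
    simp

lemma Wl_zero : Wl (fun _ => (0:ℤ)) = (1 : G n) := by
  refine G.ext ?_ ?_ <;> funext p
  · rfl
  · show (0:ℤ) * 0 = 0
    ring

lemma phi_central (φ : MulAut (G n))
    (hv : ∀ p : PairIdx n, φ (vE p.1.1 p.1.2) = vE p.1.1 p.1.2)
    (w : PairIdx n → ℤ) : φ (zDc w) = zDc w := by
  suffices h : ∀ F : Finset (PairIdx n), ∀ w : PairIdx n → ℤ,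
      (∀ p ∉ F, w p = 0) → φ (zDc w) = zDc w from
    h Finset.univ w fun p hp => absurd (Finset.mem_univ p) hp
  intro F
  induction F using Finset.induction_on with
  | empty =>
      intro w hw
      have : w = fun _ => 0 := funext fun p => hw p (by simp)
      rw [this, zDc_zero, map_one]
  | @insert q F hqF ih =>
      intro w hw
      have key : zDc w = (vE q.1.1 q.1.2 : G n) ^ (w q) * zDc (Function.update w q 0) := by
        rw [vE_zpow]
        refine G.ext ?_ ?_ <;> funext p
        · show (0:ℤ) = 0 + 0
          ring
        · show w p = (if p.1 = (q.1.1, q.1.2) then w q else 0) +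
            Function.update w q 0 p + 0 * 0
          rcases eq_or_ne p q with h | h
          · subst h
            simp
          · have hne : p.1 ≠ (q.1.1, q.1.2) := by
              intro hcon
              exact h (Subtype.ext (by rw [hcon]))
            rw [if_neg hne, Function.update_of_ne h]
            ring
      rw [key, map_mul, map_zpow, hv q, ih _ ?hsupp, ← key]
      case hsupp =>
        intro p hp
        rcases eq_or_ne p q with h | h
        · subst h; simp
        · rw [Function.update_of_ne h]
          exact hw p (by simp [h, hp])

lemma phi_Wl (φ : MulAut (G n)) (z : Fin n → G n) (hz : ∀ a j, (z a).u j = 0)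
    (hzu : ∀ a, φ (uE a) = z a * uE a) :
    ∀ (N : ℕ) (m : Fin n → ℤ), (∀ i : Fin n, N ≤ (i : ℕ) → m i = 0) →
      φ (Wl m) = psiC (fun a => (z a).v) (Wl m) := by
  intro N
  induction N with
  | zero =>
      intro m hm
      have : m = fun _ => 0 := funext fun i => hm i (Nat.zero_le _)
      rw [this, Wl_zero, map_one, psiC_one]
  | succ N ih =>
      intro m hm
      by_cases hN : N < n
      · have hq : ∀ i : Fin n, (⟨N, hN⟩ : Fin n) < i → m i = 0 := by
          intro i hi
          have h1 : N < (i : ℕ) := hi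
          exact hm i (by omega)
        have hsupp : ∀ i : Fin n,
            N ≤ (i : ℕ) → Function.update m (⟨N, hN⟩ : Fin n) 0 i = 0 := by
          intro i hi
          rcases eq_or_ne i (⟨N, hN⟩ : Fin n) with h | h
          · subst h; simp
          · rw [Function.update_of_ne h]
            refine hm i ?_
            have : (i : ℕ) ≠ N := fun hcon => h (Fin.ext hcon)
            omega
        conv_lhs => rw [Wl_step m (⟨N, hN⟩ : Fin n) hq]
        have hcz : Commute (z ⟨N, hN⟩) (uE ⟨N, hN⟩) := central_comm _ _ (hz ⟨N, hN⟩)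
        rw [map_mul, ih _ hsupp, ← uE_zpow, map_zpow, hzu ⟨N, hN⟩, hcz.mul_zpow, uE_zpow,
          central_eq_zDc (z ⟨N, hN⟩) (hz ⟨N, hN⟩), zDc_zpow]
        exact psiC_Wl_step _ m ⟨N, hN⟩ hq
      · exact ih m fun i hi => absurd i.isLt (by omega)

lemma decompG (r : G n) :
    r = zDc (fun p => r.v p - r.u p.1.1 * r.u p.1.2) * Wl r.u := by
  refine G.ext ?_ ?_ <;> funext p
  · show r.u p = 0 + r.u p
    ring
  · show r.v p = (r.v p - r.u p.1.1 * r.u p.1.2) + r.u p.1.1 * r.u p.1.2 + 0 * r.u p.1.2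
    ring

lemma phi_apply (φ : MulAut (G n))
    (hv : ∀ p : PairIdx n, φ (vE p.1.1 p.1.2) = vE p.1.1 p.1.2)
    (z : Fin n → G n) (hz : ∀ a j, (z a).u j = 0)
    (hzu : ∀ a, φ (uE a) = z a * uE a) (r : G n) :
    φ r = psiC (fun a => (z a).v) r := by
  conv_lhs => rw [decompG r]
  rw [map_mul, phi_central φ hv, phi_Wl φ z hz hzu n r.u (fun i hi => absurd i.isLt (by omega))]
  refine G.ext ?_ ?_ <;> funext p
  · show 0 + r.u p = r.u p
    ring
  · show (r.v p - r.u p.1.1 * r.u p.1.2) +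
      (r.u p.1.1 * r.u p.1.2 + ∑ a, r.u a * (z a).v p) + 0 * r.u p.1.2
      = r.v p + ∑ a, r.u a * (z a).v p
    ring

end AuxSt18

section CobSt18
variable {n : ℕ}

/-- Extension of central data to all index pairs. -/
def cVc (c : Fin n → PairIdx n → ℤ) (a j k : Fin n) : ℤ :=
  if h : j < k then c a ⟨(j, k), h⟩ else 0

/-- The correction sum appearing in `vc (φ r)`. -/
def SsumC (c : Fin n → PairIdx n → ℤ) (x : G n) (j k : Fin n) : ℤ :=
  ∑ a, uc x a * cVc c a j k

lemma vc_psiC (c : Fin n → PairIdx n → ℤ) (r : G n) (j k : Fin n) :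
    vc (psiC c r) j k = vc r j k + SsumC c r j k := by
  by_cases h : j < k
  · simp only [vc, SsumC, cVc, uc, psiC, dif_pos h]
  · simp [vc, SsumC, cVc, uc, psiC, dif_neg h]

lemma uc_mulG (r s : G n) (i : Fin n) : uc (r * s) i = uc r i + uc s i := rfl

lemma vc_mulG (r s : G n) {j k : Fin n} (h : j < k) :
    vc (r * s) j k = vc r j k + vc s j k + uc r j * uc s k := by
  unfold vc
  rw [dif_pos h, dif_pos h, dif_pos h]
  rfl

/-- Coboundaries. -/
def IsCob (Q : G n → G n → Circle) : Prop :=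
  ∃ B : G n → Circle, ∀ r s, Q r s = B r * B s * (B (r * s))⁻¹

lemma IsCob.congr' {Q1 Q2 : G n → G n → Circle} (h : ∀ r s, Q2 r s = Q1 r s)
    (hQ : IsCob Q1) : IsCob Q2 := by
  obtain ⟨B, hB⟩ := hQ
  exact ⟨B, fun r s => (h r s).trans (hB r s)⟩

lemma IsCob.mul {Q1 Q2 : G n → G n → Circle} (h1 : IsCob Q1) (h2 : IsCob Q2) :
    IsCob (fun r s => Q1 r s * Q2 r s) := by
  obtain ⟨B1, hB1⟩ := h1
  obtain ⟨B2, hB2⟩ := h2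
  refine ⟨fun t => B1 t * B2 t, fun r s => ?_⟩
  show Q1 r s * Q2 r s =
    B1 r * B2 r * (B1 s * B2 s) * (B1 (r * s) * B2 (r * s))⁻¹
  rw [hB1, hB2]
  simp only [mul_inv]
  simp [mul_comm, mul_left_comm, mul_assoc]

lemma cob_prod {ι : Type*} (F : Finset ι) (Q : ι → G n → G n → Circle)
    (h : ∀ t ∈ F, IsCob (Q t)) : IsCob (fun r s => ∏ t ∈ F, Q t r s) := by
  induction F using Finset.cons_induction with
  | empty => exact ⟨fun _ => 1, by simp⟩
  | cons a F ha ih =>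
      simp only [Finset.prod_cons]
      exact (h a (Finset.mem_cons_self a F)).mul
        (ih fun t ht => h t (Finset.mem_cons.2 (Or.inr ht)))

lemma halfsum (a b : ℤ) :
    a * (a - 1) / 2 + b * (b - 1) / 2 + a * b = (a + b) * (a + b - 1) / 2 := by
  obtain ⟨k1, h1⟩ := Int.even_mul_pred_self a
  obtain ⟨k2, h2⟩ := Int.even_mul_pred_self b
  obtain ⟨k3, h3⟩ := Int.even_mul_pred_self (a + b)
  have e1 : a * (a - 1) / 2 = k1 := by rw [h1]; omega
  have e2 : b * (b - 1) / 2 = k2 := by rw [h2]; omega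
  have e3 : (a + b) * (a + b - 1) / 2 = k3 := by rw [h3]; omega
  have hr : k3 + k3 = k1 + k1 + (k2 + k2) + 2 * (a * b) := by
    rw [← h3, ← h1, ← h2]; ring
  rw [e1, e2, e3]
  linarith

lemma cob_elem (θ : Circle) (x y : Fin n) :
    IsCob (fun r s : G n => θ ^ (uc r x * uc s y)) := by
  rcases lt_trichotomy x y with h | h | h
  · refine ⟨fun r => θ ^ (-vc r x y), fun r s => ?_⟩
    show θ ^ (uc r x * uc s y) = _
    rw [← zpow_neg, ← zpow_add, ← zpow_add]
    congr 1
    rw [vc_mulG r s h]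
    ring
  · subst h
    refine ⟨fun r => θ ^ (-(uc r x * (uc r x - 1) / 2)), fun r s => ?_⟩
    show θ ^ (uc r x * uc s x) = _
    rw [← zpow_neg, ← zpow_add, ← zpow_add]
    congr 1
    have hm : uc (r * s) x = uc r x + uc s x := rfl
    rw [hm]
    have := halfsum (uc r x) (uc s x)
    linarith
  · refine ⟨fun r => θ ^ (vc r y x - uc r x * uc r y), fun r s => ?_⟩
    show θ ^ (uc r x * uc s y) = _
    rw [← zpow_neg, ← zpow_add, ← zpow_add]
    congr 1
    have hmx : uc (r * s) x = uc r x + uc s x := rfl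
    have hmy : uc (r * s) y = uc r y + uc s y := rfl
    rw [vc_mulG r s h, hmx, hmy]
    ring

lemma cob_right (θ : Circle) (x j k : Fin n) (c : Fin n → PairIdx n → ℤ) :
    IsCob (fun r s : G n => θ ^ (SsumC c s j k * uc r x)) := by
  refine IsCob.congr' (fun r s => ?_)
    (cob_prod Finset.univ
      (fun a : Fin n => fun r s : G n => (θ ^ cVc c a j k) ^ (uc r x * uc s a))
      (fun a _ => cob_elem _ x a))
  calc θ ^ (SsumC c s j k * uc r x)
      = θ ^ (∑ a, cVc c a j k * (uc r x * uc s a)) := by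
        congr 1
        rw [SsumC, Finset.sum_mul]
        exact Finset.sum_congr rfl fun a _ => by ring
    _ = ∏ a, (θ ^ cVc c a j k) ^ (uc r x * uc s a) := by
        rw [zpow_sum']
        exact Finset.prod_congr rfl fun a _ => (zpow_mul θ _ _)

lemma cob_left (θ : Circle) (y j k : Fin n) (c : Fin n → PairIdx n → ℤ) :
    IsCob (fun r s : G n => θ ^ (uc s y * SsumC c r j k)) := by
  refine IsCob.congr' (fun r s => ?_)
    (cob_prod Finset.univ
      (fun a : Fin n => fun r s : G n => (θ ^ cVc c a j k) ^ (uc r a * uc s y))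
      (fun a _ => cob_elem _ a y))
  calc θ ^ (uc s y * SsumC c r j k)
      = θ ^ (∑ a, cVc c a j k * (uc r a * uc s y)) := by
        congr 1
        rw [SsumC, Finset.mul_sum]
        exact Finset.sum_congr rfl fun a _ => by ring
    _ = ∏ a, (θ ^ cVc c a j k) ^ (uc r a * uc s y) := by
        rw [zpow_sum']
        exact Finset.prod_congr rfl fun a _ => (zpow_mul θ _ _)

/-- The explicit coboundary quotient. -/
noncomputable def Ebig (lam : Fin n → Fin n → Fin n → Circle)
    (c : Fin n → PairIdx n → ℤ) (r s : G n) : Circle :=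
  (∏ t ∈ Finset.univ.filter
      (fun t : Fin n × Fin n × Fin n => t.1 < t.2.1 ∧ t.2.1 < t.2.2),
    lam t.1 t.2.1 t.2.2 ^ (SsumC c s t.2.1 t.2.2 * uc r t.1) *
    (lam t.1 t.2.1 t.2.2 ^ (uc s t.2.2 * SsumC c r t.1 t.2.1) *
    (lam t.2.1 t.1 t.2.2 ^ (SsumC c s t.1 t.2.2 * uc r t.2.1) *
    (lam t.2.1 t.1 t.2.2)⁻¹ ^ (uc s t.2.2 * SsumC c r t.1 t.2.1)))) *
  ∏ p ∈ Finset.univ.filter (fun p : Fin n × Fin n => p.1 < p.2),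
    lam p.1 p.1 p.2 ^ (SsumC c s p.1 p.2 * uc r p.1) *
    lam p.2 p.1 p.2 ^ (SsumC c s p.1 p.2 * uc r p.2)

lemma Ebig_cob (lam : Fin n → Fin n → Fin n → Circle)
    (c : Fin n → PairIdx n → ℤ) : IsCob (Ebig lam c) := by
  refine IsCob.congr' (fun r s => rfl) (IsCob.mul ?_ ?_)
  · refine cob_prod _ _ fun t ht => ?_
    exact (cob_right _ _ _ _ _).mul
      ((cob_left _ _ _ _ _).mul ((cob_right _ _ _ _ _).mul (cob_left _ _ _ _ _)))
  · refine cob_prod _ _ fun p hp => ?_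
    exact (cob_right _ _ _ _ _).mul (cob_right _ _ _ _ _)

lemma sigma_shift (lam : Fin n → Fin n → Fin n → Circle)
    (c : Fin n → PairIdx n → ℤ) (r s r' s' : G n)
    (hur : ∀ i, uc r' i = uc r i) (hus : ∀ i, uc s' i = uc s i)
    (hvr : ∀ j k, vc r' j k = vc r j k + SsumC c r j k)
    (hvs : ∀ j k, vc s' j k = vc s j k + SsumC c s j k) :
    sigmaLam lam r' s' = Ebig lam c r s * sigmaLam lam r s := by
  simp only [sigmaLam, Ebig, hur, hus, hvr, hvs]
  rw [mul_mul_mul_comm, ← Finset.prod_mul_distrib, ← Finset.prod_mul_distrib]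
  refine congrArg₂ (· * ·) (Finset.prod_congr rfl fun t ht => ?_)
    (Finset.prod_congr rfl fun p hp => ?_)
  · rw [inv_zpow, ← zpow_neg]
    calc lam t.1 t.2.1 t.2.2 ^
          ((vc s t.2.1 t.2.2 + SsumC c s t.2.1 t.2.2) * uc r t.1 +
            uc s t.2.2 * (vc r t.1 t.2.1 + SsumC c r t.1 t.2.1)) *
        lam t.2.1 t.1 t.2.2 ^
          ((vc s t.1 t.2.2 + SsumC c s t.1 t.2.2) * uc r t.2.1 +
            uc s t.2.2 * (uc r t.1 * uc r t.2.1 - (vc r t.1 t.2.1 + SsumC c r t.1 t.2.1)))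
        = lam t.1 t.2.1 t.2.2 ^ (SsumC c s t.2.1 t.2.2 * uc r t.1 +
            (uc s t.2.2 * SsumC c r t.1 t.2.1 +
              (vc s t.2.1 t.2.2 * uc r t.1 + uc s t.2.2 * vc r t.1 t.2.1))) *
          lam t.2.1 t.1 t.2.2 ^ (SsumC c s t.1 t.2.2 * uc r t.2.1 +
            (-(uc s t.2.2 * SsumC c r t.1 t.2.1) +
              (vc s t.1 t.2.2 * uc r t.2.1 +
                uc s t.2.2 * (uc r t.1 * uc r t.2.1 - vc r t.1 t.2.1)))) := by
          exact congrArg₂ (· * ·)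
            (congrArg (lam t.1 t.2.1 t.2.2 ^ ·) (by ring))
            (congrArg (lam t.2.1 t.1 t.2.2 ^ ·) (by ring))
    _ = _ := by
          simp only [zpow_add]
          ac_rfl
  · calc lam p.1 p.1 p.2 ^
          ((vc s p.1 p.2 + SsumC c s p.1 p.2) * uc r p.1 +
            uc s p.2 * (uc r p.1 * (uc r p.1 - 1) / 2)) *
        lam p.2 p.1 p.2 ^
          (uc r p.2 * ((vc s p.1 p.2 + SsumC c s p.1 p.2) + uc r p.1 * uc s p.2) +
            uc r p.1 * (uc s p.2 * (uc s p.2 - 1) / 2))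
        = lam p.1 p.1 p.2 ^ (SsumC c s p.1 p.2 * uc r p.1 +
            (vc s p.1 p.2 * uc r p.1 + uc s p.2 * (uc r p.1 * (uc r p.1 - 1) / 2))) *
          lam p.2 p.1 p.2 ^ (SsumC c s p.1 p.2 * uc r p.2 +
            (uc r p.2 * (vc s p.1 p.2 + uc r p.1 * uc s p.2) +
              uc r p.1 * (uc s p.2 * (uc s p.2 - 1) / 2))) := by
          exact congrArg₂ (· * ·)
            (congrArg (lam p.1 p.1 p.2 ^ ·) (by ring))
            (congrArg (lam p.2 p.1 p.2 ^ ·) (by ring))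
    _ = _ := by
          simp only [zpow_add]
          ac_rfl

end CobSt18

/-- if `φ ∈ Aut(G(n))` fixes all `v_{jk}` and maps each `u_i` to
`z_i u_i` with `z_i` central, then `σ_λ∘(φ×φ)` is similar to `σ_λ`. -/
theorem sigmaLam_comp_central_aut_similar (n : ℕ) (hn : 2 ≤ n)
    (lam : Fin n → Fin n → Fin n → Circle) (φ : MulAut (G n))
    (hv : ∀ p : PairIdx n, φ (vE p.1.1 p.1.2) = vE p.1.1 p.1.2)
    (hu : ∀ i : Fin n, ∃ z : G n, (∀ j, z.u j = 0) ∧ φ (uE i) = z * uE i) :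
    Similar (sigmaLam lam) (fun r s => sigmaLam lam (φ r) (φ s)) := by
  classical
  choose z hz hzu using hu
  have hphi := phi_apply φ hv z hz hzu
  obtain ⟨B, hB⟩ := Ebig_cob lam (fun a => (z a).v)
  refine ⟨B, fun r s => ?_⟩
  have hshift := sigma_shift lam (fun a => (z a).v) r s (φ r) (φ s)
    (fun i => by rw [hphi r]; rfl) (fun i => by rw [hphi s]; rfl)
    (fun j k => by rw [hphi r]; exact vc_psiC _ r j k)
    (fun j k => by rw [hphi s]; exact vc_psiC _ s j k)
  show sigmaLam lam (φ r) (φ s) = B r * B s * (B (r * s))⁻¹ * sigmaLam lam r s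
  rw [hshift, hB r s]


end FreeNilp
end

section
/- Let Γ be a group and let U_1, U_2, U_3, V_{12}, V_{13}, V_{23} be elements of Γ, and let μ_{i,jk} (for 1 ≤ i ≤ 3 and (j,k) ∈ {(1,2),(1,3),(2,3)}) be elements of the center of Γ, such that: [V_{jk}, V_{lm}] = e for all (j,k), (l,m) ∈ {(1,2),(1,3),(2,3)}; [U_i, V_{jk}] = μ_{i,jk} for all 1 ≤ i ≤ 3 and (j,k) ∈ {(1,2),(1,3),(2,3)}; and [U_j, U_k] = V_{jk} for 1 ≤ j < k ≤ 3. Then necessarily μ_{2,13} = μ_{1,23} · μ_{3,12}. -/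
open scoped commutatorElement

private lemma swap_of_comm {Γ : Type*} [Group Γ] {a b c : Γ}
    (h : ⁅a, b⁆ = c) : a * b = c * (b * a) := by
  rw [← h]; group

/-- among the nine central commutator scalars `μ_{i,jk}` attached to
Heisenberg-type generators `U₁, U₂, U₃`, necessarily `μ_{2,13} = μ_{1,23} · μ_{3,12}`. -/
theorem heisenberg_scalar_dependency {Γ : Type*} [Group Γ]
    (U₁ U₂ U₃ V₁₂ V₁₃ V₂₃ μ₁₁₂ μ₁₁₃ μ₁₂₃ μ₂₁₂ μ₂₁₃ μ₂₂₃ μ₃₁₂ μ₃₁₃ μ₃₂₃ : Γ)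
    (hc₁ : μ₁₁₂ ∈ Subgroup.center Γ) (hc₂ : μ₁₁₃ ∈ Subgroup.center Γ)
    (hc₃ : μ₁₂₃ ∈ Subgroup.center Γ) (hc₄ : μ₂₁₂ ∈ Subgroup.center Γ)
    (hc₅ : μ₂₁₃ ∈ Subgroup.center Γ) (hc₆ : μ₂₂₃ ∈ Subgroup.center Γ)
    (hc₇ : μ₃₁₂ ∈ Subgroup.center Γ) (hc₈ : μ₃₁₃ ∈ Subgroup.center Γ)
    (hc₉ : μ₃₂₃ ∈ Subgroup.center Γ)
    (hVV₁ : ⁅V₁₂, V₁₃⁆ = 1) (hVV₂ : ⁅V₁₂, V₂₃⁆ = 1) (hVV₃ : ⁅V₁₃, V₂₃⁆ = 1)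
    (hUV₁ : ⁅U₁, V₁₂⁆ = μ₁₁₂) (hUV₂ : ⁅U₁, V₁₃⁆ = μ₁₁₃) (hUV₃ : ⁅U₁, V₂₃⁆ = μ₁₂₃)
    (hUV₄ : ⁅U₂, V₁₂⁆ = μ₂₁₂) (hUV₅ : ⁅U₂, V₁₃⁆ = μ₂₁₃) (hUV₆ : ⁅U₂, V₂₃⁆ = μ₂₂₃)
    (hUV₇ : ⁅U₃, V₁₂⁆ = μ₃₁₂) (hUV₈ : ⁅U₃, V₁₃⁆ = μ₃₁₃) (hUV₉ : ⁅U₃, V₂₃⁆ = μ₃₂₃)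
    (hUU₁ : ⁅U₁, U₂⁆ = V₁₂) (hUU₂ : ⁅U₁, U₃⁆ = V₁₃) (hUU₃ : ⁅U₂, U₃⁆ = V₂₃) :
    μ₂₁₃ = μ₁₂₃ * μ₃₁₂ := by
  have z₃ : ∀ x : Γ, x * μ₁₂₃ = μ₁₂₃ * x := fun x => (Subgroup.mem_center_iff.mp hc₃ x)
  have z₅ : ∀ x : Γ, x * μ₂₁₃ = μ₂₁₃ * x := fun x => (Subgroup.mem_center_iff.mp hc₅ x)
  have z₇ : ∀ x : Γ, x * μ₃₁₂ = μ₃₁₂ * x := fun x => (Subgroup.mem_center_iff.mp hc₇ x)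
  have cVV₁ : V₁₂ * V₁₃ = V₁₃ * V₁₂ := by have := swap_of_comm hVV₁; simpa using this
  have cVV₂ : V₁₂ * V₂₃ = V₂₃ * V₁₂ := by have := swap_of_comm hVV₂; simpa using this
  have cVV₃ : V₁₃ * V₂₃ = V₂₃ * V₁₃ := by have := swap_of_comm hVV₃; simpa using this
  have e12 := swap_of_comm hUU₁
  have e13 := swap_of_comm hUU₂
  have e23 := swap_of_comm hUU₃
  have f₁ := swap_of_comm hUV₃  -- U₁ * V₂₃ = μ₁₂₃ * (V₂₃ * U₁)
  have f₂ := swap_of_comm hUV₅  -- U₂ * V₁₃ = μ₂₁₃ * (V₁₃ * U₂)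
  have f₃ := swap_of_comm hUV₇  -- U₃ * V₁₂ = μ₃₁₂ * (V₁₂ * U₃)
  have A : U₁ * (U₂ * U₃)
      = (μ₁₂₃ * μ₃₁₂) * (V₂₃ * (V₁₃ * (V₁₂ * (U₃ * (U₂ * U₁))))) := by
    calc U₁ * (U₂ * U₃) = (U₁ * V₂₃) * (U₃ * U₂) := by rw [e23]; group
    _ = (μ₁₂₃ * (V₂₃ * U₁)) * (U₃ * U₂) := by rw [f₁]
    _ = μ₁₂₃ * (V₂₃ * ((U₁ * U₃) * U₂)) := by group
    _ = μ₁₂₃ * (V₂₃ * ((V₁₃ * (U₃ * U₁)) * U₂)) := by rw [e13]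
    _ = μ₁₂₃ * (V₂₃ * (V₁₃ * (U₃ * (U₁ * U₂)))) := by group
    _ = μ₁₂₃ * (V₂₃ * (V₁₃ * (U₃ * (V₁₂ * (U₂ * U₁))))) := by rw [e12]
    _ = μ₁₂₃ * (V₂₃ * (V₁₃ * ((U₃ * V₁₂) * (U₂ * U₁)))) := by group
    _ = μ₁₂₃ * (V₂₃ * (V₁₃ * ((μ₃₁₂ * (V₁₂ * U₃)) * (U₂ * U₁)))) := by rw [f₃]
    _ = (μ₁₂₃ * ((V₂₃ * V₁₃) * μ₃₁₂)) * (V₁₂ * (U₃ * (U₂ * U₁))) := by group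
    _ = (μ₁₂₃ * (μ₃₁₂ * (V₂₃ * V₁₃))) * (V₁₂ * (U₃ * (U₂ * U₁))) := by rw [z₇]
    _ = (μ₁₂₃ * μ₃₁₂) * (V₂₃ * (V₁₃ * (V₁₂ * (U₃ * (U₂ * U₁))))) := by group
  have B : U₁ * (U₂ * U₃)
      = μ₂₁₃ * (V₂₃ * (V₁₃ * (V₁₂ * (U₃ * (U₂ * U₁))))) := by
    calc U₁ * (U₂ * U₃) = (U₁ * U₂) * U₃ := by group
    _ = (V₁₂ * (U₂ * U₁)) * U₃ := by rw [e12]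
    _ = V₁₂ * (U₂ * (U₁ * U₃)) := by group
    _ = V₁₂ * (U₂ * (V₁₃ * (U₃ * U₁))) := by rw [e13]
    _ = V₁₂ * ((U₂ * V₁₃) * (U₃ * U₁)) := by group
    _ = V₁₂ * ((μ₂₁₃ * (V₁₃ * U₂)) * (U₃ * U₁)) := by rw [f₂]
    _ = (V₁₂ * μ₂₁₃) * (V₁₃ * ((U₂ * U₃) * U₁)) := by group
    _ = (V₁₂ * μ₂₁₃) * (V₁₃ * ((V₂₃ * (U₃ * U₂)) * U₁)) := by rw [e23]
    _ = (μ₂₁₃ * V₁₂) * ((V₁₃ * V₂₃) * (U₃ * (U₂ * U₁))) := by rw [z₅]; group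
    _ = (μ₂₁₃ * V₁₂) * ((V₂₃ * V₁₃) * (U₃ * (U₂ * U₁))) := by rw [cVV₃]
    _ = μ₂₁₃ * ((V₁₂ * V₂₃) * (V₁₃ * (U₃ * (U₂ * U₁)))) := by group
    _ = μ₂₁₃ * ((V₂₃ * V₁₂) * (V₁₃ * (U₃ * (U₂ * U₁)))) := by rw [cVV₂]
    _ = μ₂₁₃ * (V₂₃ * ((V₁₂ * V₁₃) * (U₃ * (U₂ * U₁)))) := by group
    _ = μ₂₁₃ * (V₂₃ * ((V₁₃ * V₁₂) * (U₃ * (U₂ * U₁)))) := by rw [cVV₁]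
    _ = μ₂₁₃ * (V₂₃ * (V₁₃ * (V₁₂ * (U₃ * (U₂ * U₁))))) := by group
  exact mul_right_cancel (B.symm.trans A)
end
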